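/- arXiv:2004.02240 — 7 statements merged into one kernel-verified Lean document; each statement's English description precedes it below -/
import Mathlib

section
/- Let n, s ≥ 1 be integers and define M(n,s) = C(n+s-1, s) + C(n+s-2, s-1). If F is a finite set of unit vectors in ℝⁿ (i.e., F ⊆ Sⁿ⁻¹) such that the set of inner products {⟨p,q⟩ : p, q ∈ F, p ≠ q} has at most s elements, then |F| ≤ M(n,s). -/
open RealInnerProductSpace

open Finset in
private lemma dgs_count (n s : ℕ) (hn : 1 ≤ n) (hs : 1 ≤ s) :
    ((Fintype.piFinset fun _ : Fin n => Finset.range (s+1)).filter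
      (fun a => (∑ i, a i) ≤ s ∧ a ⟨0, hn⟩ ≤ 1)).card
      ≤ (n + s - 1).choose s + (n + s - 2).choose (s - 1) := by
  classical
  set i0 : Fin n := ⟨0, hn⟩ with hi0
  set T := ((Fintype.piFinset fun _ : Fin n => Finset.range (s+1)).filter
      (fun a => (∑ i, a i) ≤ s ∧ a i0 ≤ 1)) with hT
  have hmem : ∀ a ∈ T, (∑ i, a i) ≤ s ∧ a i0 ≤ 1 := by
    intro a ha; exact (Finset.mem_filter.mp ha).2
  -- the auxiliary multiset
  set σ : (Fin n → ℕ) → ℕ := fun a => ∑ i ∈ Finset.univ.erase i0, a i with hσ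
  set m : (Fin n → ℕ) → ℕ → Multiset (Fin n) := fun a k =>
    Multiset.replicate (k - σ a) i0 + ∑ i ∈ Finset.univ.erase i0, Multiset.replicate (a i) i with hm
  have hsplit : ∀ a : Fin n → ℕ, (∑ i, a i) = a i0 + σ a := by
    intro a
    exact (Finset.add_sum_erase Finset.univ a (Finset.mem_univ i0)).symm
  have hcardm : ∀ a k, σ a ≤ k → Multiset.card (m a k) = k := by
    intro a k hk
    simp only [hm, Multiset.card_add, Multiset.card_replicate]
    rw [Multiset.card_sum]
    simp only [Multiset.card_replicate, hσ] at *
    omega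
  have hcount : ∀ a k (j : Fin n), j ≠ i0 → Multiset.count j (m a k) = a j := by
    intro a k j hj
    simp only [hm, Multiset.count_add, Multiset.count_replicate]
    rw [Multiset.count_sum']
    simp only [Multiset.count_replicate]
    rw [if_neg (Ne.symm hj), Finset.sum_ite_eq' (Finset.univ.erase i0) j a]
    simp [hj]
  have key : T.card ≤ Fintype.card (Sym (Fin n) s ⊕ Sym (Fin n) (s-1)) := by
    rw [← Fintype.card_coe T]
    have hσs : ∀ a : ↥T, a.1 i0 = 0 → σ a.1 ≤ s := by
      intro a ha; have := (hmem a.1 a.2).1; rw [hsplit a.1, ha] at this; omega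
    have hσs1 : ∀ a : ↥T, a.1 i0 ≠ 0 → σ a.1 ≤ s - 1 := by
      intro a ha
      have h1 := (hmem a.1 a.2).1; have h2 := (hmem a.1 a.2).2
      rw [hsplit a.1] at h1; omega
    apply Fintype.card_le_of_injective (fun a : ↥T =>
      if h : a.1 i0 = 0 then Sum.inl ⟨m a.1 s, hcardm a.1 s (hσs a h)⟩
      else Sum.inr ⟨m a.1 (s-1), hcardm a.1 (s-1) (hσs1 a h)⟩)
    intro a b hab
    have hext : a.1 i0 = b.1 i0 ∧ ∀ j : Fin n, j ≠ i0 → a.1 j = b.1 j := by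
      by_cases ha : a.1 i0 = 0 <;> by_cases hb : b.1 i0 = 0
      · simp only [dif_pos ha, dif_pos hb] at hab
        have hmm : m a.1 s = m b.1 s := congrArg (fun x : Sym (Fin n) s => (x : Multiset (Fin n)))
          (Sum.inl.inj hab)
        refine ⟨by rw [ha, hb], fun j hj => ?_⟩
        rw [← hcount a.1 s j hj, ← hcount b.1 s j hj, hmm]
      · simp only [dif_pos ha, dif_neg hb] at hab; exact absurd hab (by simp)
      · simp only [dif_neg ha, dif_pos hb] at hab; exact absurd hab (by simp)
      · simp only [dif_neg ha, dif_neg hb] at hab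
        have hmm : m a.1 (s-1) = m b.1 (s-1) :=
          congrArg (fun x : Sym (Fin n) (s-1) => (x : Multiset (Fin n))) (Sum.inr.inj hab)
        have h2a := (hmem a.1 a.2).2; have h2b := (hmem b.1 b.2).2
        refine ⟨by omega, fun j hj => ?_⟩
        rw [← hcount a.1 (s-1) j hj, ← hcount b.1 (s-1) j hj, hmm]
    apply Subtype.ext
    funext j
    by_cases hj : j = i0
    · rw [hj]; exact hext.1
    · exact hext.2 j hj
  calc T.card ≤ Fintype.card (Sym (Fin n) s ⊕ Sym (Fin n) (s-1)) := key
    _ = (n + s - 1).choose s + (n + s - 2).choose (s - 1) := by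
        rw [Fintype.card_sum, Sym.card_sym_eq_choose, Sym.card_sym_eq_choose,
          Fintype.card_fin]
        congr 2
        omega

/-- Delsarte–Goethals–Seidel bound: a finite spherical `s`-distance set `F ⊆ Sⁿ⁻¹`
has at most `C(n+s-1, s) + C(n+s-2, s-1)` elements. -/
theorem delsarte_goethals_seidel_bound (n s : ℕ) (hn : 1 ≤ n) (hs : 1 ≤ s)
    (F : Finset (EuclideanSpace ℝ (Fin n)))
    (hunit : ∀ p ∈ F, ‖p‖ = 1)
    (hdist : {r : ℝ | ∃ p ∈ F, ∃ q ∈ F, p ≠ q ∧ ⟪p, q⟫ = r}.ncard ≤ s) :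
    F.card ≤ (n + s - 1).choose s + (n + s - 2).choose (s - 1) := by
  classical
  -- inner product formula
  have hip : ∀ x y : EuclideanSpace ℝ (Fin n), ⟪x, y⟫ = ∑ i, x i * y i := by
    intro x y; simp [PiLp.inner_apply, RCLike.inner_apply, conj_trivial, mul_comm]
  -- the finset of inner products
  set A : Finset ℝ := ((F ×ˢ F).filter fun z => z.1 ≠ z.2).image fun z => ⟪z.1, z.2⟫ with hA
  have hAset : (A : Set ℝ) = {r : ℝ | ∃ p ∈ F, ∃ q ∈ F, p ≠ q ∧ ⟪p, q⟫ = r} := by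
    ext r
    simp only [hA, Finset.coe_image, Set.mem_image, Finset.mem_coe, Finset.mem_filter,
      Finset.mem_product, Set.mem_setOf_eq]
    constructor
    · rintro ⟨⟨p, q⟩, ⟨⟨hp, hq⟩, hne⟩, hr⟩
      exact ⟨p, hp, q, hq, hne, hr⟩
    · rintro ⟨p, hp, q, hq, hne, hr⟩
      exact ⟨⟨p, q⟩, ⟨⟨hp, hq⟩, hne⟩, hr⟩
  have hAcard : A.card ≤ s := by
    rw [← Set.ncard_coe_finset A, hAset]; exact hdist
  have hAmem : ∀ p ∈ F, ∀ q ∈ F, q ≠ p → ⟪q, p⟫ ∈ A := by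
    intro p hp q hq hne
    rw [hA]
    exact Finset.mem_image.mpr ⟨(q, p), Finset.mem_filter.mpr
      ⟨Finset.mem_product.mpr ⟨hq, hp⟩, hne⟩, rfl⟩
  have hAone : ∀ α ∈ A, α ≠ 1 := by
    intro α hα
    rw [hA] at hα
    obtain ⟨⟨p, q⟩, hpq, hr⟩ := Finset.mem_image.mp hα
    obtain ⟨hmem, hne⟩ := Finset.mem_filter.mp hpq
    obtain ⟨hp, hq⟩ := Finset.mem_product.mp hmem
    intro h1
    exact hne ((inner_eq_one_iff_of_norm_eq_one (hunit _ hp) (hunit _ hq)).mp (hr.trans h1))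
  -- points of the sphere
  have hsphere : ∀ q : ↥F, ∑ i, ((q : EuclideanSpace ℝ (Fin n)) i)^2 = 1 := by
    intro q
    have h := hunit q.1 q.2
    have h1 := EuclideanSpace.norm_eq (q : EuclideanSpace ℝ (Fin n))
    rw [h] at h1
    have h2 : ∑ i, ‖(q : EuclideanSpace ℝ (Fin n)) i‖^2 = 1 := by
      have := congrArg (· ^ 2) h1.symm
      simpa [Real.sq_sqrt (Finset.sum_nonneg fun i _ => sq_nonneg _)] using this
    simpa [Real.norm_eq_abs, sq_abs] using h2
  -- monomials
  set i0 : Fin n := ⟨0, hn⟩ with hi0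
  set mono : (Fin n → ℕ) → (↥F → ℝ) := fun a q => ∏ i, (q : EuclideanSpace ℝ (Fin n)) i ^ a i with hmono
  have hmono_update : ∀ (a : Fin n → ℕ) (i : Fin n) (k : ℕ),
      mono (Function.update a i (a i + k)) =
        fun q : ↥F => (q : EuclideanSpace ℝ (Fin n)) i ^ k * mono a q := by
    intro a i k
    funext q
    simp only [hmono]
    rw [← Finset.mul_prod_erase Finset.univ _ (Finset.mem_univ i),
        ← Finset.mul_prod_erase Finset.univ
          (fun j => (q : EuclideanSpace ℝ (Fin n)) j ^ a j) (Finset.mem_univ i)]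
    rw [Function.update_self, pow_add]
    have hcong : ∀ j ∈ Finset.univ.erase i,
        (q : EuclideanSpace ℝ (Fin n)) j ^ (Function.update a i (a i + k)) j =
        (q : EuclideanSpace ℝ (Fin n)) j ^ a j := fun j hj => by
      rw [Function.update_of_ne (Finset.ne_of_mem_erase hj)]
    rw [Finset.prod_congr rfl hcong]
    ring
  have hmono_sum_update : ∀ (a : Fin n → ℕ) (i : Fin n) (k : ℕ),
      (∑ j, Function.update a i (a i + k) j) = k + ∑ j, a j := by
    intro a i k
    rw [← Finset.add_sum_erase Finset.univ _ (Finset.mem_univ i),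
        ← Finset.add_sum_erase Finset.univ a (Finset.mem_univ i)]
    rw [Function.update_self]
    have hcong : ∀ j ∈ Finset.univ.erase i,
        (Function.update a i (a i + k)) j = a j := fun j hj => by
      rw [Function.update_of_ne (Finset.ne_of_mem_erase hj)]
    rw [Finset.sum_congr rfl hcong]
    have heta : ∑ x ∈ Finset.univ.erase i, a x = (Finset.univ.erase i).sum a := rfl
    omega
  set T : Finset (Fin n → ℕ) := ((Fintype.piFinset fun _ : Fin n => Finset.range (s+1)).filter
      (fun a => (∑ i, a i) ≤ s ∧ a i0 ≤ 1)) with hT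
  set W : Submodule ℝ (↥F → ℝ) := Submodule.span ℝ ↑(T.image mono) with hW
  have hgen : ∀ a : Fin n → ℕ, (∑ i, a i) ≤ s → a i0 ≤ 1 → mono a ∈ W := by
    intro a h1 h2
    apply Submodule.subset_span
    rw [Finset.coe_image]
    refine Set.mem_image_of_mem mono ?_
    rw [Finset.mem_coe, hT, Finset.mem_filter]
    refine ⟨Fintype.mem_piFinset.mpr fun i => Finset.mem_range.mpr ?_, h1, h2⟩
    have : a i ≤ ∑ j, a j := Finset.single_le_sum (fun j _ => Nat.zero_le _) (Finset.mem_univ i)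
    omega
  -- every monomial of degree ≤ s restricted to F lies in W
  have hmonoW : ∀ (M : ℕ) (a : Fin n → ℕ), a i0 ≤ M → (∑ i, a i) ≤ s → mono a ∈ W := by
    intro M
    induction M with
    | zero => intro a h1 h2; exact hgen a h2 (by omega)
    | succ M ih =>
      intro a h1 h2
      by_cases hle : a i0 ≤ 1
      · exact hgen a h2 hle
      · push_neg at hle
        set a' : Fin n → ℕ := Function.update a i0 (a i0 - 2) with ha'
        have ha'i0 : a' i0 = a i0 - 2 := Function.update_self i0 _ a
        have haeq : a = Function.update a' i0 (a' i0 + 2) := by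
          funext j
          by_cases hj : j = i0
          · subst hj; rw [Function.update_self]; omega
          · rw [Function.update_of_ne hj, ha', Function.update_of_ne hj]
        have hsum' : (∑ i, a' i) + 2 = ∑ i, a i := by
          conv_rhs => rw [haeq]
          rw [hmono_sum_update]; omega
        -- mono a = mono a' - ∑_{i ≠ i0} mono (a' + 2 e_i)
        have hsplit : mono a = mono a' - ∑ i ∈ Finset.univ.erase i0,
            mono (Function.update a' i (a' i + 2)) := by
          funext q
          have h1q := hsphere q
          have h2q : ((q : EuclideanSpace ℝ (Fin n)) i0)^2 = 1 - ∑ i ∈ Finset.univ.erase i0, ((q : EuclideanSpace ℝ (Fin n)) i)^2 := by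
            rw [← Finset.add_sum_erase Finset.univ (fun i => ((q : EuclideanSpace ℝ (Fin n)) i)^2) (Finset.mem_univ i0)] at h1q
            linarith
          have e1 : mono a q = ((q : EuclideanSpace ℝ (Fin n)) i0)^2 * mono a' q := by
            conv_lhs => rw [haeq]
            rw [hmono_update]
          have e2 : ∀ i, mono (Function.update a' i (a' i + 2)) q = ((q : EuclideanSpace ℝ (Fin n)) i)^2 * mono a' q := by
            intro i; rw [hmono_update]
          simp only [Pi.sub_apply, Finset.sum_apply]
          rw [e1, h2q, Finset.sum_congr rfl (fun i _ => e2 i), ← Finset.sum_mul]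
          ring
        rw [hsplit]
        apply sub_mem
        · apply ih
          · omega
          · omega
        · apply Submodule.sum_mem
          intro i hi
          apply ih
          · rw [Function.update_of_ne (Finset.ne_of_mem_erase hi).symm, ha'i0]; omega
          · rw [hmono_sum_update]; omega
  -- powers of linear forms lie in W
  have hlinpow : ∀ (p : EuclideanSpace ℝ (Fin n)) (k : ℕ), k ≤ s →
      (fun q : ↥F => (∑ i, (q : EuclideanSpace ℝ (Fin n)) i * p i) ^ k) ∈ W := by
    intro p k hk
    -- we show it lies in the span of monomials of degree ≤ k
    set Vk : ℕ → Submodule ℝ (↥F → ℝ) :=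
      fun k => Submodule.span ℝ (mono '' {a | (∑ i, a i) ≤ k}) with hVk
    have hVW : ∀ j ≤ s, Vk j ≤ W := by
      intro j hj
      rw [hVk]
      apply Submodule.span_le.mpr
      rintro _ ⟨a, ha, rfl⟩
      exact hmonoW (a i0) a le_rfl (le_trans ha hj)
    have hstep : ∀ (j : ℕ) (f : ↥F → ℝ), f ∈ Vk j →
        (fun q : ↥F => (∑ i, (q : EuclideanSpace ℝ (Fin n)) i * p i) * f q) ∈ Vk (j+1) := by
      intro j
      set L : (↥F → ℝ) →ₗ[ℝ] (↥F → ℝ) :=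
        { toFun := fun f q => (∑ i, (q : EuclideanSpace ℝ (Fin n)) i * p i) * f q
          map_add' := by intro f g; funext q; simp [mul_add]
          map_smul' := by
            intro c f; funext q
            simp only [Pi.smul_apply, smul_eq_mul, RingHom.id_apply]
            ring } with hL
      intro f hf
      have : Submodule.map L (Vk j) ≤ Vk (j+1) := by
        rw [hVk, Submodule.map_span]
        apply Submodule.span_le.mpr
        rintro _ ⟨_, ⟨a, ha, rfl⟩, rfl⟩
        have hexp : L (mono a) = ∑ i, p i • mono (Function.update a i (a i + 1)) := by
          funext q
          simp only [hL, LinearMap.coe_mk, AddHom.coe_mk, Finset.sum_apply, Pi.smul_apply,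
            smul_eq_mul]
          rw [Finset.sum_mul]
          refine Finset.sum_congr rfl fun i _ => ?_
          rw [hmono_update a i 1]
          ring
        rw [hexp]
        apply Submodule.sum_mem
        intro i _
        apply Submodule.smul_mem
        apply Submodule.subset_span
        refine ⟨Function.update a i (a i + 1), ?_, rfl⟩
        simp only [Set.mem_setOf_eq]
        rw [hmono_sum_update]
        simp only [Set.mem_setOf_eq] at ha
        omega
      exact this (Submodule.mem_map_of_mem hf)
    have hpow : ∀ j : ℕ, (fun q : ↥F => (∑ i, (q : EuclideanSpace ℝ (Fin n)) i * p i) ^ j) ∈ Vk j := by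
      intro j
      induction j with
      | zero =>
        have : (fun _ : ↥F => (1 : ℝ)) = mono (fun _ => 0) := by
          funext q; simp [hmono]
        simp only [pow_zero]
        rw [this]
        exact Submodule.subset_span ⟨fun _ => 0, by simp, rfl⟩
      | succ j ihj =>
        have := hstep j _ ihj
        simpa [pow_succ, mul_comm] using this
    exact hVW k hk (hpow k)
  -- the product functions
  have hgp : ∀ p ∈ F, (fun q : ↥F => ∏ α ∈ A, (⟪(q : EuclideanSpace ℝ (Fin n)), p⟫ - α)) ∈ W := by
    intro p hp
    set P : Polynomial ℝ := ∏ α ∈ A, (Polynomial.X - Polynomial.C α) with hP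
    have hdeg : P.natDegree < s + 1 := by
      have h1 : P.natDegree ≤ ∑ α ∈ A, (Polynomial.X - Polynomial.C α).natDegree :=
        Polynomial.natDegree_prod_le A _
      have h2 : ∀ α : ℝ, (Polynomial.X - Polynomial.C α).natDegree = 1 := fun α =>
        Polynomial.natDegree_X_sub_C α
      rw [Finset.sum_congr rfl fun α _ => h2 α, Finset.sum_const, smul_eq_mul, mul_one] at h1
      omega
    have heval : (fun q : ↥F => ∏ α ∈ A, (⟪(q : EuclideanSpace ℝ (Fin n)), p⟫ - α)) =
        ∑ k ∈ Finset.range (s+1), P.coeff k • (fun q : ↥F => (∑ i, (q : EuclideanSpace ℝ (Fin n)) i * p i) ^ k) := by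
      funext q
      have := Polynomial.eval_eq_sum_range' hdeg (⟪(q : EuclideanSpace ℝ (Fin n)), p⟫)
      rw [hP] at this
      simp only [Polynomial.eval_prod, Polynomial.eval_sub, Polynomial.eval_X,
        Polynomial.eval_C] at this
      rw [this]
      simp only [Finset.sum_apply, Pi.smul_apply, smul_eq_mul]
      refine Finset.sum_congr rfl fun k _ => ?_
      rw [hip]
    rw [heval]
    apply Submodule.sum_mem
    intro k hk
    exact Submodule.smul_mem _ _ (hlinpow p k (by
      have := Finset.mem_range.mp hk; omega))
  -- the indicator functions lie in W
  have hind : ∀ p : ↥F, Pi.single p (1 : ℝ) ∈ W := by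
    intro p
    set c : ℝ := ∏ α ∈ A, (1 - α) with hc
    have hc0 : c ≠ 0 := by
      rw [hc]
      apply Finset.prod_ne_zero_iff.mpr
      intro α hα
      have := hAone α hα
      intro h; apply this; linarith
    have hval : (fun q : ↥F => ∏ α ∈ A, (⟪(q : EuclideanSpace ℝ (Fin n)), p.1⟫ - α)) = c • (Pi.single p (1 : ℝ) : ↥F → ℝ) := by
      funext q
      by_cases hq : q = p
      · subst hq
        have h1 : ⟪(q : EuclideanSpace ℝ (Fin n)), q.1⟫ = 1 := by
          rw [real_inner_self_eq_norm_sq, hunit q.1 q.2]; norm_num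
        simp [h1, Pi.single_apply, hc, hunit q.1 q.2]
      · have hne : (q : EuclideanSpace ℝ (Fin n)) ≠ p.1 := fun h => hq (Subtype.ext h)
        have hmem := hAmem p.1 p.2 q.1 q.2 hne
        rw [Finset.prod_eq_zero hmem (by ring)]
        simp [Pi.single_apply, hq]
    have := hgp p.1 p.2
    rw [hval] at this
    have h2 : (Pi.single p (1 : ℝ) : ↥F → ℝ) = c⁻¹ • (c • (Pi.single p (1 : ℝ) : ↥F → ℝ)) := by
      rw [smul_smul, inv_mul_cancel₀ hc0, one_smul]
    rw [h2]
    exact Submodule.smul_mem _ _ this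
  -- linear independence of the indicators
  have hli : LinearIndependent ℝ (fun p : ↥F => Pi.single p (1 : ℝ)) := by
    have h := (Pi.basisFun ℝ ↥F).linearIndependent
    have e : ⇑(Pi.basisFun ℝ ↥F) = fun p : ↥F => Pi.single p (1 : ℝ) := by
      funext p; exact Pi.basisFun_apply ℝ ↥F p
    rwa [e] at h
  -- conclusion
  have hcard : F.card ≤ Module.finrank ℝ W := by
    rw [← Fintype.card_coe F]
    set v : ↥F → W := fun p => ⟨Pi.single p (1 : ℝ), hind p⟩ with hv
    have hliv : LinearIndependent ℝ v := by
      apply LinearIndependent.of_comp W.subtype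
      have : W.subtype ∘ v = fun p : ↥F => Pi.single p (1 : ℝ) := rfl
      rwa [this]
    exact hliv.fintype_card_le_finrank
  have hrank : Module.finrank ℝ W ≤ T.card := by
    calc Module.finrank ℝ W ≤ (T.image mono).card := finrank_span_finset_le_card _
      _ ≤ T.card := Finset.card_image_le
  calc F.card ≤ T.card := le_trans hcard hrank
    _ ≤ (n + s - 1).choose s + (n + s - 2).choose (s - 1) := dgs_count n s hn hs
end

section
/- Let n ≥ 1 be a positive integer and let s > 0 be an even integer. Let S be a finite set of unit vectors in ℝⁿ whose set of pairwise inner products is contained in {t₁, …, t_s} with t₁ + ⋯ + t_s ≥ 0. Then |S| ≤ M(n, s-2) + ((n+2s-2)/s)·C(n+s-1, s-1), where M(n,s) = C(n+s-1, s) + C(n+s-2, s-1). -/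
open RealInnerProductSpace

section BM
variable {n : ℕ} (S : Finset (EuclideanSpace ℝ (Fin n)))

noncomputable def bmMon (m : Multiset (Fin n)) : (↥S → ℝ) :=
  fun q => (m.map fun j => (q : EuclideanSpace ℝ (Fin n)) j).prod

lemma bmMon_add (m₁ m₂ : Multiset (Fin n)) :
    bmMon S (m₁ + m₂) = bmMon S m₁ * bmMon S m₂ := by
  funext q
  simp [bmMon, Multiset.map_add, Multiset.prod_add]

lemma bmMon_zero : bmMon S 0 = 1 := by
  funext q; simp [bmMon]

noncomputable def bmV (d : ℕ) : Submodule ℝ (↥S → ℝ) :=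
  Submodule.span ℝ (bmMon S '' {m | Multiset.card m = d})

noncomputable def bmD (k : ℕ) : Submodule ℝ (↥S → ℝ) :=
  Submodule.span ℝ (bmMon S '' {m | Multiset.card m ≤ k})

lemma bmV_le_D (d : ℕ) : bmV S d ≤ bmD S d :=
  Submodule.span_mono (Set.image_mono fun m hm => le_of_eq hm)

lemma bmD_mono {a b : ℕ} (h : a ≤ b) : bmD S a ≤ bmD S b :=
  Submodule.span_mono (Set.image_mono fun m hm => le_trans hm h)

lemma bmD_mul (a b : ℕ) : bmD S a * bmD S b ≤ bmD S (a + b) := by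
  rw [bmD, bmD, Submodule.span_mul_span]
  apply Submodule.span_le.2
  rintro x hx
  rw [Set.mem_mul] at hx
  obtain ⟨u, hu, v, hv, rfl⟩ := hx
  obtain ⟨m₁, hm₁, rfl⟩ := hu
  obtain ⟨m₂, hm₂, rfl⟩ := hv
  rw [← bmMon_add]
  exact Submodule.subset_span ⟨m₁ + m₂, by simpa using Nat.add_le_add hm₁ hm₂, rfl⟩

end BM

section BM2
variable {n : ℕ} {S : Finset (EuclideanSpace ℝ (Fin n))}
variable (hunit : ∀ p ∈ S, ‖p‖ = 1)

include hunit in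
lemma bm_sq_sum (q : ↥S) :
    ∑ j, (q : EuclideanSpace ℝ (Fin n)) j * (q : EuclideanSpace ℝ (Fin n)) j = 1 := by
  have h1 : ⟪(q : EuclideanSpace ℝ (Fin n)), (q : EuclideanSpace ℝ (Fin n))⟫ = 1 := by
    rw [real_inner_self_eq_norm_sq, hunit q.1 q.2]; norm_num
  rw [← h1, PiLp.inner_apply]
  simp [RCLike.inner_apply, conj_trivial, pow_two]

include hunit in
lemma bmV_step (d : ℕ) : bmV S d ≤ bmV S (d + 2) := by
  apply Submodule.span_le.2
  rintro x ⟨m, hm, rfl⟩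
  simp only [Set.mem_setOf_eq] at hm
  have key : bmMon S m = ∑ j : Fin n, bmMon S (j ::ₘ j ::ₘ m) := by
    funext q
    have : ∀ j : Fin n, bmMon S (j ::ₘ j ::ₘ m) q
        = (q : EuclideanSpace ℝ (Fin n)) j * (q : EuclideanSpace ℝ (Fin n)) j * bmMon S m q := by
      intro j; simp [bmMon, mul_assoc]
    simp only [Finset.sum_apply, this]
    rw [← Finset.sum_mul, bm_sq_sum hunit q, one_mul]
  rw [key]
  refine Submodule.sum_mem _ fun j _ => Submodule.subset_span ⟨j ::ₘ j ::ₘ m, by simp [hm], rfl⟩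

include hunit in
lemma bmV_le_of_add (d j : ℕ) : bmV S d ≤ bmV S (d + 2 * j) := by
  induction j with
  | zero => simp
  | succ k ih =>
      refine le_trans ih (le_trans (bmV_step hunit _) (le_of_eq ?_))
      ring_nf

end BM2

section BM3
variable {n : ℕ} {S : Finset (EuclideanSpace ℝ (Fin n))}
variable (hunit : ∀ p ∈ S, ‖p‖ = 1)

lemma bm_const_mem (c : ℝ) : (fun _ : ↥S => c) ∈ bmD S 0 := by
  have : (fun _ : ↥S => c) = c • bmMon S 0 := by
    funext q; simp [bmMon_zero]
  rw [this]
  exact Submodule.smul_mem _ _ (Submodule.subset_span ⟨0, by simp, rfl⟩)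

lemma bm_lin_mem (p : EuclideanSpace ℝ (Fin n)) :
    (fun q : ↥S => ⟪(q : EuclideanSpace ℝ (Fin n)), p⟫) ∈ bmD S 1 := by
  have : (fun q : ↥S => ⟪(q : EuclideanSpace ℝ (Fin n)), p⟫)
      = ∑ j : Fin n, p j • bmMon S {j} := by
    funext q
    simp only [Finset.sum_apply, Pi.smul_apply, smul_eq_mul, PiLp.inner_apply,
      RCLike.inner_apply, conj_trivial, bmMon]
    simp [Multiset.prod_singleton, mul_comm]
  rw [this]
  exact Submodule.sum_mem _ fun j _ =>
    Submodule.smul_mem _ _ (Submodule.subset_span ⟨{j}, by simp, rfl⟩)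

lemma bm_factor_mem (p : EuclideanSpace ℝ (Fin n)) (c : ℝ) :
    (fun q : ↥S => ⟪(q : EuclideanSpace ℝ (Fin n)), p⟫ - c) ∈ bmD S 1 := by
  have : (fun q : ↥S => ⟪(q : EuclideanSpace ℝ (Fin n)), p⟫ - c)
      = (fun q : ↥S => ⟪(q : EuclideanSpace ℝ (Fin n)), p⟫) - (fun _ : ↥S => c) := rfl
  rw [this]
  exact Submodule.sub_mem _ (bm_lin_mem p) (bmD_mono S (by norm_num) (bm_const_mem c))

lemma bm_prod_mem {s : ℕ} (p : EuclideanSpace ℝ (Fin n)) (t : Fin s → ℝ) :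
    (fun q : ↥S => ∏ i, (⟪(q : EuclideanSpace ℝ (Fin n)), p⟫ - t i)) ∈ bmD S s := by
  have hfun : (fun q : ↥S => ∏ i, (⟪(q : EuclideanSpace ℝ (Fin n)), p⟫ - t i))
      = ∏ i : Fin s, (fun q : ↥S => ⟪(q : EuclideanSpace ℝ (Fin n)), p⟫ - t i) := by
    funext q; simp
  rw [hfun]
  have key : ∀ F : Finset (Fin s),
      (∏ i ∈ F, (fun q : ↥S => ⟪(q : EuclideanSpace ℝ (Fin n)), p⟫ - t i)) ∈ bmD S F.card := by
    intro F
    induction F using Finset.induction with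
    | empty => rw [Finset.prod_empty, Finset.card_empty]; exact bm_const_mem (S := S) 1
    | insert a F' hx ih =>
        rw [Finset.prod_insert hx, Finset.card_insert_of_notMem hx]
        have h2 := bmD_mul S 1 F'.card (Submodule.mul_mem_mul (bm_factor_mem p (t a)) ih)
        have : 1 + F'.card = F'.card + 1 := by omega
        rw [this] at h2
        exact h2
  simpa using key Finset.univ

end BM3

section BM4
variable {n : ℕ} {S : Finset (EuclideanSpace ℝ (Fin n))}
variable (hunit : ∀ p ∈ S, ‖p‖ = 1)

include hunit in
lemma bmD_le_sup {s : ℕ} (hs : 0 < s) (hse : Even s) :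
    bmD S s ≤ bmV S s ⊔ bmV S (s - 1) := by
  apply Submodule.span_le.2
  rintro x ⟨m, hm, rfl⟩
  simp only [Set.mem_setOf_eq] at hm
  set k := Multiset.card m with hk
  have hmem : bmMon S m ∈ bmV S k := Submodule.subset_span ⟨m, rfl, rfl⟩
  rcases Nat.even_or_odd k with hke | hko
  · -- k even, k ≤ s, s even : s = k + 2j
    obtain ⟨j, hj⟩ : ∃ j, s = k + 2 * j := by
      obtain ⟨a, ha⟩ := hke; obtain ⟨b, hb⟩ := hse
      exact ⟨b - a, by omega⟩
    exact le_sup_left (α := Submodule ℝ (↥S → ℝ)) (hj ▸ bmV_le_of_add hunit k j hmem)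
  · obtain ⟨j, hj⟩ : ∃ j, s - 1 = k + 2 * j := by
      obtain ⟨a, ha⟩ := hko; obtain ⟨b, hb⟩ := hse
      exact ⟨b - a - 1, by omega⟩
    exact le_sup_right (α := Submodule ℝ (↥S → ℝ)) (hj ▸ bmV_le_of_add hunit k j hmem)

lemma bmV_finrank_le (d : ℕ) :
    Module.finrank ℝ (bmV S d) ≤ (n + d - 1).choose d := by
  have : bmV S d = Submodule.span ℝ (Set.range fun m : Sym (Fin n) d => bmMon S m.1) := by
    rw [bmV]
    congr 1
    ext x
    constructor
    · rintro ⟨m, hm, rfl⟩; exact ⟨⟨m, hm⟩, rfl⟩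
    · rintro ⟨⟨m, hm⟩, rfl⟩; exact ⟨m, hm, rfl⟩
  rw [this]
  refine le_trans (finrank_range_le_card _) ?_
  rw [Sym.card_sym_eq_choose, Fintype.card_fin]

end BM4

section BM5
variable {n : ℕ} {S : Finset (EuclideanSpace ℝ (Fin n))}

lemma bm_classical {s : ℕ} (hs : 0 < s) (hse : Even s)
    (hunit : ∀ p ∈ S, ‖p‖ = 1)
    (t : Fin s → ℝ)
    (hdist : ∀ p ∈ S, ∀ q ∈ S, p ≠ q → ⟪p, q⟫ ∈ Set.range t) :
    S.card ≤ (n + s - 1).choose s + (n + s - 2).choose (s - 1) := by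
  classical
  set t' : Fin s → ℝ := fun i => if t i = 1 then 2 else t i with ht'
  have ht'ne : ∀ i, t' i ≠ 1 := by
    intro i; simp only [ht']; split <;> norm_num; assumption
  set f : ↥S → (↥S → ℝ) :=
    fun p q => ∏ i, (⟪(q : EuclideanSpace ℝ (Fin n)), (p : EuclideanSpace ℝ (Fin n))⟫ - t' i)
    with hf
  have hdiag : ∀ p : ↥S, f p p ≠ 0 := by
    intro p
    have h1 : ⟪(p : EuclideanSpace ℝ (Fin n)), (p : EuclideanSpace ℝ (Fin n))⟫ = 1 := by
      rw [real_inner_self_eq_norm_sq, hunit p.1 p.2]; norm_num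
    rw [hf]
    simp only [h1]
    exact Finset.prod_ne_zero_iff.2 fun i _ => sub_ne_zero.2 fun h => ht'ne i h.symm
  have hoff : ∀ p q : ↥S, p ≠ q → f p q = 0 := by
    intro p q hpq
    have hne : (q : EuclideanSpace ℝ (Fin n)) ≠ (p : EuclideanSpace ℝ (Fin n)) := by
      intro h; exact hpq (Subtype.ext h.symm)
    obtain ⟨i, hi⟩ := hdist q.1 q.2 p.1 p.2 hne
    have hlt : t i ≠ 1 := by
      intro h
      rw [h] at hi
      exact hne ((inner_eq_one_iff_of_norm_eq_one (hunit q.1 q.2) (hunit p.1 p.2)).1 hi.symm)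
    have : t' i = t i := by simp [ht', hlt]
    rw [hf]
    exact Finset.prod_eq_zero (Finset.mem_univ i) (by rw [this, hi, sub_self])
  have hindep : LinearIndependent ℝ f := by
    rw [Fintype.linearIndependent_iff]
    intro g hg q
    have := congrFun hg q
    simp only [Finset.sum_apply, Pi.smul_apply, smul_eq_mul, Pi.zero_apply] at this
    rw [Finset.sum_eq_single q (fun p _ hp => by rw [hoff p q hp, mul_zero])
      (fun h => absurd (Finset.mem_univ q) h)] at this
    exact (mul_eq_zero.1 this).resolve_right (hdiag q)
  set U : Submodule ℝ (↥S → ℝ) := bmV S s ⊔ bmV S (s - 1) with hU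
  have hmemU : ∀ p : ↥S, f p ∈ U := fun p =>
    bmD_le_sup hunit hs hse (bm_prod_mem (p : EuclideanSpace ℝ (Fin n)) t')
  set g : ↥S → ↥U := fun p => ⟨f p, hmemU p⟩ with hgdef
  have hgindep : LinearIndependent ℝ g := by
    apply LinearIndependent.of_comp U.subtype
    exact hindep
  have hcard : Fintype.card ↥S ≤ Module.finrank ℝ U :=
    LinearIndependent.fintype_card_le_finrank hgindep
  rw [Fintype.card_coe] at hcard
  refine hcard.trans ?_
  refine (Submodule.finrank_add_le_finrank_add_finrank _ _).trans ?_
  have h2 : n + (s - 1) - 1 = n + s - 2 := by omega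
  exact Nat.add_le_add (bmV_finrank_le s) (h2 ▸ bmV_finrank_le (s - 1))

end BM5

/-- Barg–Musin bound: if `S ⊆ Sⁿ⁻¹` has all pairwise inner products among
`t₁, …, t_s` with `s` even and `t₁ + ⋯ + t_s ≥ 0`, then
`|S| ≤ M(n, s-2) + ((n+2s-2)/s)·C(n+s-1, s-1)` where
`M(n,s) = C(n+s-1, s) + C(n+s-2, s-1)`. -/
theorem barg_musin_bound (n s : ℕ) (hn : 1 ≤ n) (hs : 0 < s) (hseven : Even s)
    (t : Fin s → ℝ) (hsum : 0 ≤ ∑ i, t i)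
    (S : Finset (EuclideanSpace ℝ (Fin n)))
    (hunit : ∀ p ∈ S, ‖p‖ = 1)
    (hdist : ∀ p ∈ S, ∀ q ∈ S, p ≠ q → ⟪p, q⟫ ∈ Set.range t) :
    (S.card : ℝ) ≤
      ((n + (s - 2) - 1).choose (s - 2) + (n + (s - 2) - 2).choose (s - 2 - 1) : ℝ)
        + ((n + 2 * s - 2 : ℝ) / s) * ((n + s - 1).choose (s - 1) : ℝ) := by
  have hs2 : 2 ≤ s := by obtain ⟨k, hk⟩ := hseven; omega
  have hmain := bm_classical hs hseven hunit t hdist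
  set C1 := (n + s - 1).choose s with hC1
  set C2 := (n + s - 2).choose (s - 1) with hC2
  set C3 := (n + s - 1).choose (s - 1) with hC3
  have hkey : s * C1 + s * C2 ≤ (n + 2 * s - 2) * C3 := by
    have h1 : C1 * s = C3 * n := by
      have h := Nat.choose_succ_right_eq (n + s - 1) (s - 1)
      have hss : s - 1 + 1 = s := by omega
      have h2 : n + s - 1 - (s - 1) = n := by omega
      rw [hss, h2] at h
      exact h
    have h2 : C2 ≤ C3 := Nat.choose_le_choose _ (by omega)
    calc s * C1 + s * C2 ≤ n * C3 + (2 * s - 2) * C3 := by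
          refine Nat.add_le_add (le_of_eq (by rw [← mul_comm C1 s, h1, mul_comm])) ?_
          exact Nat.mul_le_mul (by omega) h2
      _ = (n + 2 * s - 2) * C3 := by rw [← Nat.add_mul]; congr 1; omega
  have hspos : (0 : ℝ) < (s : ℝ) := by exact_mod_cast hs
  have hcast : ((n + 2 * s - 2 : ℕ) : ℝ) = (n : ℝ) + 2 * s - 2 := by
    have h2 : (2 : ℕ) ≤ n + 2 * s := by omega
    rw [Nat.cast_sub h2]; push_cast; ring
  have hkeyR : (s : ℝ) * C1 + (s : ℝ) * C2 ≤ ((n : ℝ) + 2 * s - 2) * C3 := by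
    have := (Nat.cast_le (α := ℝ)).2 hkey
    push_cast at this
    rw [hcast] at this
    linarith
  have hreal : (C1 : ℝ) + C2 ≤ ((n : ℝ) + 2 * s - 2) / s * C3 := by
    rw [div_mul_eq_mul_div, le_div_iff₀ hspos]
    nlinarith [hkeyR]
  have hmainR : (S.card : ℝ) ≤ (C1 : ℝ) + C2 := by
    have := (Nat.cast_le (α := ℝ)).2 hmain
    push_cast at this
    linarith
  have hpos : (0 : ℝ) ≤ ((n + (s - 2) - 1).choose (s - 2) + (n + (s - 2) - 2).choose (s - 2 - 1) : ℝ) := by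
    positivity
  linarith
end

section
/- Let n ≥ 1 be a positive integer. If F is a finite set of unit vectors in ℝⁿ such that the set of inner products {⟨p,q⟩ : p, q ∈ F, p ≠ q} has at most 2 elements, then |F| ≤ n(n+3)/2. -/
open RealInnerProductSpace

section aux

variable {n : ℕ}

private lemma euclid_inner_apply (x y : EuclideanSpace ℝ (Fin n)) :
    ⟪x, y⟫ = ∑ i, x i * y i := by
  simp [PiLp.inner_apply, RCLike.inner_apply, starRingEnd_apply]
  exact Finset.sum_congr rfl fun i _ => mul_comm _ _

end aux

/-- A spherical two-distance set in `ℝⁿ` has at most `n(n+3)/2` points. -/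
theorem two_distance_set_bound (n : ℕ) (hn : 1 ≤ n)
    (F : Finset (EuclideanSpace ℝ (Fin n)))
    (hunit : ∀ p ∈ F, ‖p‖ = 1)
    (hdist : {r : ℝ | ∃ p ∈ F, ∃ q ∈ F, p ≠ q ∧ ⟪p, q⟫ = r}.ncard ≤ 2) :
    F.card ≤ n * (n + 3) / 2 := by
  classical
  set S : Set ℝ := {r : ℝ | ∃ p ∈ F, ∃ q ∈ F, p ≠ q ∧ ⟪p, q⟫ = r} with hSdef
  have hbig : 4 ≤ n * (n + 3) := by
    calc 4 = 1 * 4 := by norm_num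
    _ ≤ n * (n + 3) := Nat.mul_le_mul hn (by omega)
  have h2le : 2 ≤ n * (n + 3) / 2 := by
    calc 2 = 4 / 2 := by norm_num
    _ ≤ n * (n + 3) / 2 := Nat.div_le_div_right hbig
  by_cases hcard : F.card ≤ 1
  · omega
  push_neg at hcard
  obtain ⟨p₀, hp₀, q₀, hq₀, hpq₀⟩ := Finset.one_lt_card.mp hcard
  have hS_ne : S.Nonempty := ⟨⟪p₀, q₀⟫, p₀, hp₀, q₀, hq₀, hpq₀, rfl⟩
  have hS_fin : S.Finite := by
    apply Set.Finite.subset ((F.finite_toSet.prod F.finite_toSet).image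
      (fun pq : EuclideanSpace ℝ (Fin n) × EuclideanSpace ℝ (Fin n) => ⟪pq.1, pq.2⟫))
    rintro r ⟨p, hp, q, hq, hne, rfl⟩
    exact ⟨(p, q), ⟨hp, hq⟩, rfl⟩
  -- pick the (at most two) inner product values
  obtain ⟨a, b, ha, hb, hsub⟩ : ∃ a b, a ∈ S ∧ b ∈ S ∧ S ⊆ {a, b} := by
    obtain ⟨a, ha⟩ := hS_ne
    by_cases hb : ∃ b ∈ S, b ≠ a
    · obtain ⟨b, hb, hba⟩ := hb
      refine ⟨a, b, ha, hb, fun c hc => ?_⟩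
      by_contra hc'
      simp only [Set.mem_insert_iff, Set.mem_singleton_iff, not_or] at hc'
      have h3 : ({c, a, b} : Set ℝ) ⊆ S := by
        intro x hx
        rcases hx with rfl | rfl | hx
        · exact hc
        · exact ha
        · rw [Set.mem_singleton_iff] at hx; subst hx; exact hb
      have hle := Set.ncard_le_ncard h3 hS_fin
      rw [Set.ncard_insert_of_notMem (by simp [hc'.1, hc'.2])
        ((Set.finite_singleton b).insert a), Set.ncard_pair (Ne.symm hba)] at hle
      omega
    · push_neg at hb
      exact ⟨a, a, ha, ha, fun c hc => by simp [hb c hc]⟩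
  have hne1 : ∀ r ∈ S, r ≠ 1 := by
    rintro r ⟨p, hp, q, hq, hpq, rfl⟩ h1
    exact hpq ((inner_eq_one_iff_of_norm_eq_one (hunit p hp) (hunit q hq)).mp h1)
  -- the generating family of functions on F
  set g : (Sym2 (Fin n) ⊕ Fin n) → ({x // x ∈ F} → ℝ) := fun k q =>
    Sum.rec (fun s => Sym2.lift ⟨fun i j => (q : EuclideanSpace ℝ (Fin n)) i *
      (q : EuclideanSpace ℝ (Fin n)) j, fun i j => mul_comm _ _⟩ s)
      (fun i => (q : EuclideanSpace ℝ (Fin n)) i) k with hg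
  -- the quadratic functions attached to the points of F
  set v : {x // x ∈ F} → ({x // x ∈ F} → ℝ) := fun p q =>
    (⟪(p : EuclideanSpace ℝ (Fin n)), (q : EuclideanSpace ℝ (Fin n))⟫ - a) *
    (⟪(p : EuclideanSpace ℝ (Fin n)), (q : EuclideanSpace ℝ (Fin n))⟫ - b) with hv
  have hq1 : ∀ q : {x // x ∈ F},
      ∑ i, (q : EuclideanSpace ℝ (Fin n)) i * (q : EuclideanSpace ℝ (Fin n)) i = 1 := by
    intro q
    have := real_inner_self_eq_norm_mul_norm (q : EuclideanSpace ℝ (Fin n))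
    rw [hunit _ q.2, mul_one, euclid_inner_apply] at this
    exact this
  -- each `v p` lies in the span of the family `g`
  have hmem : ∀ p, v p ∈ Submodule.span ℝ (Set.range g) := by
    intro p
    have hexp : v p =
        (∑ i, ∑ j, ((p : EuclideanSpace ℝ (Fin n)) i * (p : EuclideanSpace ℝ (Fin n)) j)
          • g (.inl s(i, j)))
        + (∑ i : Fin n, (a * b) • g (.inl s(i, i)))
        + (∑ i, (-(a + b) * (p : EuclideanSpace ℝ (Fin n)) i) • g (.inr i)) := by
      funext q
      simp only [hv, hg, Pi.add_apply, Finset.sum_apply, Pi.smul_apply, smul_eq_mul,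
        Sym2.lift_mk]
      rw [euclid_inner_apply]
      have e1 : ∑ i, ∑ j, (p : EuclideanSpace ℝ (Fin n)) i * (p : EuclideanSpace ℝ (Fin n)) j
            * ((q : EuclideanSpace ℝ (Fin n)) i * (q : EuclideanSpace ℝ (Fin n)) j)
          = (∑ i, (p : EuclideanSpace ℝ (Fin n)) i * (q : EuclideanSpace ℝ (Fin n)) i)
            * (∑ i, (p : EuclideanSpace ℝ (Fin n)) i * (q : EuclideanSpace ℝ (Fin n)) i) := by
        rw [Finset.sum_mul_sum]
        exact Finset.sum_congr rfl fun i _ => Finset.sum_congr rfl fun j _ => by ring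
      have e2 : ∑ i : Fin n, a * b *
            ((q : EuclideanSpace ℝ (Fin n)) i * (q : EuclideanSpace ℝ (Fin n)) i) = a * b := by
        rw [← Finset.mul_sum, hq1 q, mul_one]
      have e3 : ∑ i, -(a + b) * (p : EuclideanSpace ℝ (Fin n)) i
            * ((q : EuclideanSpace ℝ (Fin n)) i)
          = -(a + b) * ∑ i, (p : EuclideanSpace ℝ (Fin n)) i
            * (q : EuclideanSpace ℝ (Fin n)) i := by
        rw [Finset.mul_sum]
        exact Finset.sum_congr rfl fun i _ => by ring
      rw [e1, e2, e3]
      ring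
    have hgr : ∀ k, g k ∈ Submodule.span ℝ (Set.range g) := fun k =>
      Submodule.subset_span ⟨k, rfl⟩
    rw [hexp]
    refine Submodule.add_mem _ (Submodule.add_mem _ ?_ ?_) ?_
    · exact Submodule.sum_mem _ fun i _ => Submodule.sum_mem _ fun j _ =>
        Submodule.smul_mem _ _ (hgr (.inl s(i, j)))
    · exact Submodule.sum_mem _ fun i _ =>
        Submodule.smul_mem _ _ (hgr (.inl s(i, i)))
    · exact Submodule.sum_mem _ fun i _ =>
        Submodule.smul_mem _ _ (hgr (.inr i))
  -- the functions `v p` are linearly independent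
  have hindep : LinearIndependent ℝ v := by
    rw [Fintype.linearIndependent_iff]
    intro c hc p
    have hc' := congrFun hc p
    simp only [Finset.sum_apply, Pi.smul_apply, smul_eq_mul, Pi.zero_apply] at hc'
    rw [Finset.sum_eq_single p] at hc'
    · have hvpp : v p p = (1 - a) * (1 - b) := by
        have hpp : ⟪(p : EuclideanSpace ℝ (Fin n)), (p : EuclideanSpace ℝ (Fin n))⟫ = 1 := by
          rw [real_inner_self_eq_norm_mul_norm, hunit _ p.2, mul_one]
        show (⟪(p : EuclideanSpace ℝ (Fin n)), (p : EuclideanSpace ℝ (Fin n))⟫ - a) *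
          (⟪(p : EuclideanSpace ℝ (Fin n)), (p : EuclideanSpace ℝ (Fin n))⟫ - b)
          = (1 - a) * (1 - b)
        rw [hpp]
      rw [hvpp] at hc'
      have hA : (1 : ℝ) - a ≠ 0 := sub_ne_zero.mpr (Ne.symm (hne1 a ha))
      have hB : (1 : ℝ) - b ≠ 0 := sub_ne_zero.mpr (Ne.symm (hne1 b hb))
      rcases mul_eq_zero.mp hc' with h | h
      · exact h
      · exact absurd h (mul_ne_zero hA hB)
    · intro q _ hqp
      have hmemS : ⟪(q : EuclideanSpace ℝ (Fin n)), (p : EuclideanSpace ℝ (Fin n))⟫ ∈ S :=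
        ⟨q, q.2, p, p.2, fun h => hqp (Subtype.ext h), rfl⟩
      have hz : v q p = 0 := by
        show (⟪(q : EuclideanSpace ℝ (Fin n)), (p : EuclideanSpace ℝ (Fin n))⟫ - a) *
          (⟪(q : EuclideanSpace ℝ (Fin n)), (p : EuclideanSpace ℝ (Fin n))⟫ - b) = 0
        rcases hsub hmemS with h | h
        · rw [h]; ring
        · rw [Set.mem_singleton_iff] at h; rw [h]; ring
      rw [hz, mul_zero]
    · intro h; exact absurd (Finset.mem_univ p) h
  -- restrict to the span and count
  set Sp := Submodule.span ℝ (Set.range g) with hSp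
  haveI : Module.Finite ℝ Sp := FiniteDimensional.span_of_finite ℝ (Set.finite_range g)
  have hindep' : LinearIndependent ℝ (fun p => (⟨v p, hmem p⟩ : Sp)) := by
    apply LinearIndependent.of_comp Sp.subtype
    convert hindep
    rfl
  have hcard1 : F.card ≤ Module.finrank ℝ Sp := by
    have := hindep'.fintype_card_le_finrank
    rwa [Fintype.card_coe] at this
  have hcard2 : Module.finrank ℝ Sp ≤ Fintype.card (Sym2 (Fin n) ⊕ Fin n) :=
    finrank_range_le_card g
  have hcount : Fintype.card (Sym2 (Fin n) ⊕ Fin n) = (n + 1) * n / 2 + n := by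
    rw [Fintype.card_sum, Fintype.card_fin, Sym2.card, Fintype.card_fin,
      Nat.choose_two_right]
    simp
  have hfin : F.card ≤ (n + 1) * n / 2 + n :=
    le_trans hcard1 (le_trans hcard2 (le_of_eq hcount))
  have hkey : (n + 1) * n / 2 + n = n * (n + 3) / 2 := by
    have h3 : 2 ∣ n * n + n := by
      have := Nat.even_mul_succ_self n
      rw [Nat.mul_add, mul_one] at this
      exact this.two_dvd
    have h1 : (n + 1) * n = n * n + n := by ring
    have h2 : n * (n + 3) = n * n + 3 * n := by ring
    rw [h1, h2]
    generalize n * n = k at h3 ⊢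
    omega
  rw [← hkey]
  exact hfin
end

section
/- Let t > 0 be a positive integer and set n = 3·2^{2t-1} − 1. Then there exists a set S of unit vectors in ℝⁿ with |S| = (2/9)(n+1)² and a real number α such that ⟨p,q⟩ ∈ {α, -α} for all distinct p, q ∈ S. -/
open RealInnerProductSpace

open Finset Polynomial

namespace DeCaen

noncomputable section


/-- The real character of `ZMod 2`. -/
def chi (e : ZMod 2) : ℝ := if e = 0 then 1 else -1

lemma zmod2_cases (e : ZMod 2) : e = 0 ∨ e = 1 := by revert e; decide

lemma chi_zero : chi 0 = 1 := if_pos rfl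

lemma chi_one : chi 1 = -1 := by rw [chi, if_neg one_ne_zero]

lemma chi_add (a b : ZMod 2) : chi (a + b) = chi a * chi b := by
  rcases zmod2_cases a with rfl | rfl <;> rcases zmod2_cases b with rfl | rfl <;>
    simp [chi, show (1 + 1 : ZMod 2) = 0 from by decide, one_ne_zero]

lemma chi_mul_self (a : ZMod 2) : chi a * chi a = 1 := by
  rcases zmod2_cases a with rfl | rfl <;> norm_num [chi]

lemma chi_inj {a b : ZMod 2} (h : chi a = chi b) : a = b := by
  rcases zmod2_cases a with rfl | rfl <;> rcases zmod2_cases b with rfl | rfl <;>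
    first | rfl | (norm_num [chi] at h)

/-- Character sum over a finite group vanishes for a nonzero additive functional. -/
lemma sum_chi_eq_zero {M : Type*} [AddCommGroup M] [Fintype M] (φ : M → ZMod 2)
    (hadd : ∀ a b, φ (a + b) = φ a + φ b) (hne : ∃ z, φ z ≠ 0) :
    ∑ v : M, chi (φ v) = 0 := by
  obtain ⟨z, hz⟩ := hne
  have hz1 : φ z = 1 := (zmod2_cases _).resolve_left hz
  have h1 : ∑ v : M, chi (φ (v + z)) = ∑ v : M, chi (φ v) :=
    Equiv.sum_comp (Equiv.addRight z) fun u => chi (φ u)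
  have h2 : ∀ v : M, chi (φ (v + z)) = - chi (φ v) := by
    intro v
    rw [hadd, hz1, chi_add, chi_one]; ring
  rw [Finset.sum_congr rfl (fun v _ => h2 v), Finset.sum_neg_distrib] at h1
  linarith

/-- Squared Gauss sum for a "quadratic" function with nondegenerate polar form. -/
lemma gauss_sq {M : Type*} [AddCommGroup M] [Fintype M] (f : M → ZMod 2) (B : M → M → ZMod 2)
    (hf : ∀ u v, f (u + v) = f u + f v + B u v) (hf0 : f 0 = 0)
    (hBadd : ∀ u v w, B (u + v) w = B u w + B v w)
    (hBnd : ∀ w, w ≠ 0 → ∃ v, B v w ≠ 0) :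
    (∑ v : M, chi (f v)) ^ 2 = Fintype.card M := by
  have hB0 : ∀ v : M, B v 0 = 0 := by
    intro v
    have := hf v 0
    rw [add_zero, hf0, add_zero] at this
    exact (left_eq_add.mp this)
  have sq : (∑ v : M, chi (f v)) ^ 2 = ∑ v : M, ∑ u : M, chi (f v) * chi (f u) := by
    rw [sq, Finset.sum_mul_sum]
  have reidx : ∀ v : M, ∑ u : M, chi (f v) * chi (f u)
      = ∑ w : M, chi (f w) * chi (B v w) := by
    intro v
    rw [← Equiv.sum_comp (Equiv.addLeft v) (fun u => chi (f v) * chi (f u))]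
    refine Finset.sum_congr rfl fun w _ => ?_
    have hfvw : f (v + w) = f v + (f w + B v w) := by rw [hf]; ring
    have : (Equiv.addLeft v) w = v + w := rfl
    rw [this, hfvw, chi_add, ← mul_assoc, chi_mul_self, one_mul, chi_add]
  rw [sq, Finset.sum_congr rfl (fun v _ => reidx v), Finset.sum_comm]
  have inner0 : ∀ w : M, w ≠ 0 → ∑ v : M, chi (f w) * chi (B v w) = 0 := by
    intro w hw
    rw [← Finset.mul_sum]
    rw [sum_chi_eq_zero (fun v => B v w) (fun a b => hBadd a b w) ?_, mul_zero]
    obtain ⟨v, hv⟩ := hBnd w hw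
    exact ⟨v, hv⟩
  rw [Fintype.sum_eq_single 0 ?_]
  · simp [hB0, chi_zero, hf0]
  · intro w hw
    exact inner0 w hw



abbrev K (m : ℕ) : Type := GaloisField 2 m

instance (m : ℕ) : Fintype (K m) := Fintype.ofFinite _

variable {m : ℕ}

lemma card_K (hm : m ≠ 0) : Fintype.card (K m) = 2 ^ m := by
  rw [← Nat.card_eq_fintype_card]
  exact GaloisField.card 2 m hm

lemma pow_card_K (hm : m ≠ 0) (a : K m) : a ^ (2 ^ m) = a := by
  have := FiniteField.pow_card a
  rwa [card_K hm] at this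

/-- The "trace" `a + a² + a⁴ + ⋯` as an element of the field. -/
def T (m : ℕ) (a : K m) : K m := ∑ j ∈ Finset.range m, a ^ (2 ^ j)

lemma T_add (a b : K m) : T m (a + b) = T m a + T m b := by
  unfold T
  rw [← Finset.sum_add_distrib]
  exact Finset.sum_congr rfl fun j _ => add_pow_char_pow ..

lemma T_zero : T m (0 : K m) = 0 := by
  unfold T
  refine Finset.sum_eq_zero fun j _ => ?_
  exact zero_pow (by positivity)

lemma T_shift (hm : m ≠ 0) (a : K m) : ∑ j ∈ range m, a ^ 2 ^ (j + 1) = T m a := by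
  have h2 := Finset.sum_range_succ' (fun j => a ^ 2 ^ j) m
  have h3 := Finset.sum_range_succ (fun j => a ^ 2 ^ j) m
  have hfm : a ^ 2 ^ m = a := pow_card_K hm a
  have hf0 : a ^ 2 ^ (0 : ℕ) = a := by norm_num
  simp only [hfm, hf0] at h2 h3
  unfold T
  linear_combination h3 - h2

lemma T_pow_two (hm : m ≠ 0) (a : K m) : (T m a) ^ 2 = T m a := by
  unfold T
  rw [sum_pow_char]
  have h1 : ∀ j, (a ^ 2 ^ j) ^ 2 = a ^ 2 ^ (j + 1) := fun j => by
    rw [← pow_mul, pow_succ]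
  rw [Finset.sum_congr rfl fun j _ => h1 j]
  exact T_shift hm a

lemma T_sq (hm : m ≠ 0) (a : K m) : T m (a ^ 2) = T m a := by
  unfold T
  have h1 : ∀ j, (a ^ 2) ^ 2 ^ j = a ^ 2 ^ (j + 1) := fun j => by
    rw [← pow_mul, pow_succ, mul_comm]
  rw [Finset.sum_congr rfl fun j _ => h1 j]
  exact T_shift hm a

lemma T_zero_or_one (hm : m ≠ 0) (a : K m) : T m a = 0 ∨ T m a = 1 := by
  have h := T_pow_two hm a
  have h2 : T m a * (T m a - 1) = 0 := by linear_combination h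
  rcases mul_eq_zero.mp h2 with h' | h'
  · exact Or.inl h'
  · exact Or.inr (sub_eq_zero.mp h')

lemma T_exists_ne (hm : m ≠ 0) : ∃ a : K m, T m a ≠ 0 := by
  by_contra h
  push_neg at h
  set P : Polynomial (K m) := ∑ j ∈ range m, Polynomial.X ^ (2 ^ j) with hP
  have hev : ∀ a : K m, P.eval a = 0 := by
    intro a
    have : P.eval a = T m a := by
      simp [hP, Polynomial.eval_finset_sum, T]
    rw [this]; exact h a
  have hdegle : P.natDegree ≤ 2 ^ (m - 1) := by
    apply Polynomial.natDegree_sum_le_of_forall_le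
    intro j hj
    rw [Finset.mem_range] at hj
    rw [Polynomial.natDegree_X_pow]
    exact Nat.pow_le_pow_right (by norm_num) (by omega : j ≤ m - 1)
  have hdeg : P.natDegree < Fintype.card (K m) := by
    rw [card_K hm]
    calc P.natDegree ≤ 2 ^ (m - 1) := hdegle
      _ < 2 ^ m := Nat.pow_lt_pow_right (by norm_num) (by omega)
  have hP0 : P = 0 :=
    Polynomial.eq_zero_of_natDegree_lt_card_of_eval_eq_zero' P Finset.univ
      (fun i _ => hev i) (by rwa [Finset.card_univ])
  have hcoeff : P.coeff (2 ^ (m - 1)) = 1 := by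
    rw [hP, Polynomial.finset_sum_coeff]
    rw [Finset.sum_eq_single (m - 1)]
    · simp
    · intro j hj hne
      rw [Polynomial.coeff_X_pow, if_neg]
      intro hc
      exact hne (Nat.pow_right_injective (le_refl 2) hc.symm)
    · intro hmem
      exact absurd (Finset.mem_range.mpr (by omega)) hmem
  rw [hP0] at hcoeff
  simp at hcoeff


lemma zmod2_add_self (x : ZMod 2) : x + x = 0 := by revert x; decide

lemma zmod2_add_eq_zero {x y : ZMod 2} (h : x + y = 0) : x = y := by revert x y h; decide

open scoped Classical in
/-- The trace map to `ZMod 2`. -/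
def tr (m : ℕ) (a : K m) : ZMod 2 := if T m a = 1 then 1 else 0

def iota (m : ℕ) : ZMod 2 →+* K m := algebraMap (ZMod 2) (K m)

lemma iota_tr (hm : m ≠ 0) (a : K m) : iota m (tr m a) = T m a := by
  unfold tr
  rcases T_zero_or_one hm a with h | h <;> simp [h, zero_ne_one]

lemma iota_inj : Function.Injective (iota m) := RingHom.injective (iota m)

lemma tr_add (hm : m ≠ 0) (a b : K m) : tr m (a + b) = tr m a + tr m b := by
  apply iota_inj (m := m)
  rw [map_add, iota_tr hm, iota_tr hm, iota_tr hm, T_add]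

lemma tr_zero : tr m 0 = 0 := by
  unfold tr
  simp [T_zero, zero_ne_one]

lemma tr_sq (hm : m ≠ 0) (a : K m) : tr m (a ^ 2) = tr m a := by
  apply iota_inj (m := m)
  rw [iota_tr hm, iota_tr hm, T_sq hm]

lemma tr_pow_two_pow (hm : m ≠ 0) (k : ℕ) (a : K m) : tr m (a ^ 2 ^ k) = tr m a := by
  induction k with
  | zero => simp
  | succ k ih =>
    have : a ^ 2 ^ (k + 1) = (a ^ 2 ^ k) ^ 2 := by
      rw [← pow_mul, pow_succ]
    rw [this, tr_sq hm, ih]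

lemma tr_one (hmo : Odd m) : tr m 1 = 1 := by
  have hm : m ≠ 0 := by rcases hmo with ⟨k, hk⟩; omega
  have hT : T m 1 = 1 := by
    unfold T
    simp only [one_pow, Finset.sum_const, card_range]
    obtain ⟨k, hk⟩ := hmo
    rw [hk, add_smul, one_smul, mul_comm 2 k, mul_smul, CharTwo.two_nsmul, smul_zero,
      zero_add]
  unfold tr
  rw [hT, if_pos rfl]

lemma tr_exists_one (hm : m ≠ 0) : ∃ z : K m, tr m z = 1 := by
  obtain ⟨z, hz⟩ := T_exists_ne hm
  refine ⟨z, ?_⟩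
  unfold tr
  rw [if_pos ((T_zero_or_one hm z).resolve_left hz)]

lemma tr_ne_zero_on (hm : m ≠ 0) {a : K m} (ha : a ≠ 0) : ∃ x, tr m (a * x) = 1 := by
  obtain ⟨z, hz⟩ := tr_exists_one hm
  exact ⟨a⁻¹ * z, by rw [← mul_assoc, mul_inv_cancel₀ ha, one_mul, hz]⟩

lemma eq_zero_of_tr_mul (hm : m ≠ 0) {u : K m} (h : ∀ x, tr m (u * x) = 0) : u = 0 := by
  by_contra hu
  obtain ⟨x, hx⟩ := tr_ne_zero_on hm hu
  rw [h x] at hx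
  exact zero_ne_one hx

lemma tr_sum (hm : m ≠ 0) {ι : Type*} (s : Finset ι) (g : ι → K m) :
    tr m (∑ i ∈ s, g i) = ∑ i ∈ s, tr m (g i) := by
  classical
  induction s using Finset.induction_on with
  | empty => simp [tr_zero]
  | insert a s hni ih =>
    rw [Finset.sum_insert hni, Finset.sum_insert hni, tr_add hm, ih]

lemma tr_iota_mul (hm : m ≠ 0) (e : ZMod 2) (b : K m) :
    tr m (iota m e * b) = e * tr m b := by
  rcases zmod2_cases e with rfl | rfl
  · rw [map_zero, zero_mul, zero_mul, tr_zero]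
  · rw [map_one, one_mul, one_mul]

lemma sum_frob (hm : m ≠ 0) (a b : K m) :
    ∑ j ∈ range m, tr m (a ^ 2 ^ j * b) = tr m a * tr m b := by
  rw [← tr_sum hm]
  have h1 : ∑ j ∈ range m, a ^ 2 ^ j * b = iota m (tr m a) * b := by
    rw [← Finset.sum_mul, iota_tr hm]
    rfl
  rw [h1, tr_iota_mul hm]

lemma cross_sum {t : ℕ} (hmt : m + 1 = 2 * t) (a b : K m) :
    ∑ j ∈ Icc 1 (t - 1), (tr m (a ^ 2 ^ j * b) + tr m (a * b ^ 2 ^ j))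
      = tr m a * tr m b + tr m (a * b) := by
  have hm : m ≠ 0 := by omega
  rw [Finset.sum_add_distrib]
  have hstep : ∀ j ∈ Icc 1 (t - 1), tr m (a * b ^ 2 ^ j) = tr m (a ^ 2 ^ (m - j) * b) := by
    intro j hj
    rw [mem_Icc] at hj
    have hjm : j ≤ m := by omega
    have hpow : (a * b ^ 2 ^ j) ^ 2 ^ (m - j) = a ^ 2 ^ (m - j) * b := by
      rw [mul_pow, ← pow_mul, ← pow_add, Nat.add_sub_cancel' hjm, pow_card_K hm]
    rw [← tr_pow_two_pow hm (m - j) (a * b ^ 2 ^ j), hpow]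
  rw [Finset.sum_congr rfl hstep]
  have hre : ∑ j ∈ Icc 1 (t - 1), tr m (a ^ 2 ^ (m - j) * b)
      = ∑ j ∈ Icc t (m - 1), tr m (a ^ 2 ^ j * b) := by
    refine Finset.sum_nbij' (fun j => m - j) (fun j => m - j) ?_ ?_ ?_ ?_ ?_
    · intro j hj; rw [mem_Icc] at hj ⊢; omega
    · intro j hj; rw [mem_Icc] at hj ⊢; omega
    · intro j hj; rw [mem_Icc] at hj; omega
    · intro j hj; rw [mem_Icc] at hj; omega
    · intro j hj; dsimp only
  rw [hre]
  have hunion : ∑ j ∈ Icc 1 (t - 1), tr m (a ^ 2 ^ j * b)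
      + ∑ j ∈ Icc t (m - 1), tr m (a ^ 2 ^ j * b)
      = ∑ j ∈ Icc 1 (m - 1), tr m (a ^ 2 ^ j * b) := by
    have hdisj : Disjoint (Icc 1 (t - 1)) (Icc t (m - 1)) := by
      rw [Finset.disjoint_left]
      intro j hj1 hj2
      rw [mem_Icc] at hj1 hj2
      omega
    rw [← Finset.sum_union hdisj]
    apply Finset.sum_congr ?_ fun _ _ => rfl
    ext j
    simp only [Finset.mem_union, mem_Icc]
    omega
  rw [hunion]
  have hr : range m = insert 0 (Icc 1 (m - 1)) := by
    ext j
    simp only [Finset.mem_insert, mem_Icc, Finset.mem_range]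
    omega
  have hfrob := sum_frob hm a b
  rw [hr, Finset.sum_insert (by simp)] at hfrob
  rw [pow_zero, pow_one] at hfrob
  rw [← hfrob]
  have hx := zmod2_add_self (tr m (a * b))
  linear_combination -hx

/-- The linear "pairing" on `K m × ZMod 2`. -/
def pairf (m : ℕ) (b v : K m × ZMod 2) : ZMod 2 := tr m (b.1 * v.1) + b.2 * v.2

/-- The Kerdock quadratic form attached to `s`. -/
def Qf (m t : ℕ) (s : K m) (v : K m × ZMod 2) : ZMod 2 :=
  (∑ j ∈ Icc 1 (t - 1), tr m ((s * v.1) ^ (2 ^ j + 1))) + v.2 * tr m (s * v.1)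

/-- Its polar form. -/
def Bf (m : ℕ) (s : K m) (u v : K m × ZMod 2) : ZMod 2 :=
  tr m (s ^ 2 * u.1 * v.1) + tr m (s * u.1) * tr m (s * v.1)
    + u.2 * tr m (s * v.1) + v.2 * tr m (s * u.1)

lemma Qf_zero {t : ℕ} (s : K m) : Qf m t s 0 = 0 := by
  unfold Qf
  have : ∀ j ∈ Icc 1 (t - 1), tr m ((s * (0 : K m × ZMod 2).1) ^ (2 ^ j + 1)) = 0 := by
    intro j hj
    rw [show (0 : K m × ZMod 2).1 = 0 from rfl, mul_zero, zero_pow (by positivity), tr_zero]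
  rw [Finset.sum_congr rfl this, Finset.sum_const_zero]
  simp [tr_zero]

lemma pairf_zero (b : K m × ZMod 2) : pairf m b 0 = 0 := by
  simp [pairf, tr_zero]

lemma pairf_add_right (hm : m ≠ 0) (b u v : K m × ZMod 2) :
    pairf m b (u + v) = pairf m b u + pairf m b v := by
  unfold pairf
  simp only [Prod.fst_add, Prod.snd_add, mul_add, tr_add hm]
  ring

lemma pairf_nondeg {t : ℕ} (hmt : m + 1 = 2 * t) {b : K m × ZMod 2} (hb : b ≠ 0) :
    ∃ v, pairf m b v ≠ 0 := by
  have hm : m ≠ 0 := by omega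
  by_cases h1 : b.1 = 0
  · have h2 : b.2 ≠ 0 := by
      intro h2
      exact hb (Prod.ext h1 h2)
    have h2' : b.2 = 1 := (zmod2_cases b.2).resolve_left h2
    refine ⟨(0, 1), ?_⟩
    simp [pairf, h2', tr_zero]
  · obtain ⟨x, hx⟩ := tr_ne_zero_on hm h1
    refine ⟨(x, 0), ?_⟩
    simp [pairf, hx]

lemma Qf_polar {t : ℕ} (hmt : m + 1 = 2 * t) (s : K m) (u v : K m × ZMod 2) :
    Qf m t s (u + v) = Qf m t s u + Qf m t s v + Bf m s u v := by
  have hm : m ≠ 0 := by omega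
  set a := s * u.1 with ha
  set b := s * v.1 with hb
  have hsum : ∑ j ∈ Icc 1 (t - 1), tr m ((a + b) ^ (2 ^ j + 1))
      = (∑ j ∈ Icc 1 (t - 1), tr m (a ^ (2 ^ j + 1)))
        + (∑ j ∈ Icc 1 (t - 1), tr m (b ^ (2 ^ j + 1)))
        + (tr m a * tr m b + tr m (a * b)) := by
    have hterm : ∀ j ∈ Icc 1 (t - 1), tr m ((a + b) ^ (2 ^ j + 1))
        = (tr m (a ^ (2 ^ j + 1)) + tr m (b ^ (2 ^ j + 1)))
          + (tr m (a ^ 2 ^ j * b) + tr m (a * b ^ 2 ^ j)) := by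
      intro j hj
      have hexp : (a + b) ^ (2 ^ j + 1)
          = (a ^ (2 ^ j + 1) + b ^ (2 ^ j + 1)) + (a ^ 2 ^ j * b + a * b ^ 2 ^ j) := by
        rw [pow_succ, pow_succ, pow_succ, add_pow_char_pow]
        ring
      rw [hexp, tr_add hm, tr_add hm, tr_add hm]
    rw [Finset.sum_congr rfl hterm, Finset.sum_add_distrib, Finset.sum_add_distrib,
      cross_sum hmt a b]
  have hab : s * (u + v).1 = a + b := by
    rw [Prod.fst_add, mul_add]
  have habmul : s ^ 2 * u.1 * v.1 = a * b := by rw [ha, hb]; ring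
  unfold Qf Bf
  rw [hab, habmul, hsum, Prod.snd_add, tr_add hm, ← ha, ← hb]
  ring

lemma Bf_add_left (hm : m ≠ 0) (s : K m) (u u' w : K m × ZMod 2) :
    Bf m s (u + u') w = Bf m s u w + Bf m s u' w := by
  have e1 : s ^ 2 * (u + u').1 * w.1 = s ^ 2 * u.1 * w.1 + s ^ 2 * u'.1 * w.1 := by
    rw [Prod.fst_add]; ring
  have e2 : s * (u + u').1 = s * u.1 + s * u'.1 := by rw [Prod.fst_add]; ring
  unfold Bf
  rw [e1, e2, tr_add hm, tr_add hm, Prod.snd_add]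
  ring

lemma D_nondeg {t : ℕ} (hmt : m + 1 = 2 * t) {s s' : K m} (hss : s ≠ s') :
    ∀ w : K m × ZMod 2, w ≠ 0 → ∃ v, Bf m s v w + Bf m s' v w ≠ 0 := by
  have hm : m ≠ 0 := by omega
  have hmo : Odd m := ⟨t - 1, by omega⟩
  intro w hw
  by_contra hcon
  push_neg at hcon
  set c := s + s' with hc
  have hcne : c ≠ 0 := by
    rw [hc, ← CharTwo.sub_eq_add]
    exact sub_ne_zero.mpr hss
  -- first consequence : tr (c * w.1) = 0
  have h1 : tr m (c * w.1) = 0 := by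
    have := hcon (0, 1)
    simp only [Bf, mul_zero, zero_mul, tr_zero, one_mul, add_zero, zero_add,
      mul_one] at this
    calc tr m (c * w.1) = tr m (s * w.1) + tr m (s' * w.1) := by
          rw [← tr_add hm]; congr 1; rw [hc]; ring
      _ = 0 := by
          rw [← this]
  set τ := tr m (s * w.1) with hτ
  set τ' := tr m (s' * w.1) with hτ'
  have hττ' : τ = τ' := by
    apply zmod2_add_eq_zero
    rw [hτ, hτ', ← tr_add hm]
    calc tr m (s * w.1 + s' * w.1) = tr m (c * w.1) := by congr 1; rw [hc]; ring
      _ = 0 := h1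
  -- second consequence : a linear functional vanishes
  set u0 : K m := c ^ 2 * w.1 + iota m τ * s + iota m τ' * s' + iota m w.2 * c with hu0
  have h2 : u0 = 0 := by
    apply eq_zero_of_tr_mul hm
    intro x
    have hx := hcon (x, 0)
    simp only [Bf, zero_mul, add_zero] at hx
    have hrw : u0 * x = s ^ 2 * x * w.1 + iota m τ * (s * x) + iota m τ' * (s' * x)
        + iota m w.2 * (c * x) + s' ^ 2 * x * w.1 + (c^2*x*w.1 - s^2*x*w.1 - s'^2*x*w.1) := by
      rw [hu0]; ring
    have hc2 : c ^ 2 * x * w.1 - s ^ 2 * x * w.1 - s' ^ 2 * x * w.1 = 2 * (s*s'*x*w.1) := by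
      rw [hc]; ring
    have h2K : (2 : K m) = 0 := by exact_mod_cast CharP.cast_eq_zero (K m) 2
    rw [hrw, hc2, h2K, zero_mul, add_zero]
    rw [tr_add hm, tr_add hm, tr_add hm, tr_add hm, tr_iota_mul hm, tr_iota_mul hm, tr_iota_mul hm]
    have hxw : tr m (s ^ 2 * x * w.1) = tr m (s * x * (s * w.1)) := by congr 1; ring
    have hxw' : tr m (s' ^ 2 * x * w.1) = tr m (s' * x * (s' * w.1)) := by congr 1; ring
    rw [hxw, hxw']
    -- now compare with hx
    calc tr m (s * x * (s * w.1)) + τ * tr m (s * x) + τ' * tr m (s' * x)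
          + w.2 * tr m (c * x) + tr m (s' * x * (s' * w.1))
        = (tr m (s ^ 2 * x * w.1) + tr m (s * x) * tr m (s * w.1) + w.2 * tr m (s * x))
          + (tr m (s' ^ 2 * x * w.1) + tr m (s' * x) * tr m (s' * w.1)
            + w.2 * tr m (s' * x)) := by
          rw [← hxw, ← hxw', hτ, hτ']
          have hcx : tr m (c * x) = tr m (s * x) + tr m (s' * x) := by
            rw [← tr_add hm]; congr 1; rw [hc]; ring
          rw [hcx]; try ring
      _ = 0 := by rw [← hx]
  -- now solve
  have hfac : c * (c * w.1 + iota m τ + iota m w.2) = 0 := by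
    calc c * (c * w.1 + iota m τ + iota m w.2)
        = c ^ 2 * w.1 + iota m τ * s + iota m τ * s' + iota m w.2 * c := by
          rw [hc]; ring
      _ = u0 := by rw [hu0, hττ']
      _ = 0 := h2
  have hlin : c * w.1 + iota m τ + iota m w.2 = 0 := by
    rcases mul_eq_zero.mp hfac with h | h
    · exact absurd h hcne
    · exact h
  have h2K : (2 : K m) = 0 := by exact_mod_cast CharP.cast_eq_zero (K m) 2
  have hcw : c * w.1 = iota m (τ + w.2) := by
    rw [map_add]
    linear_combination hlin - h2K * (iota m τ + iota m w.2)
  rcases zmod2_cases (τ + w.2) with h0 | h0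
  · rw [h0, map_zero] at hcw
    have hw1 : w.1 = 0 := by
      rcases mul_eq_zero.mp hcw with h | h
      · exact absurd h hcne
      · exact h
    have hτ0 : τ = 0 := by rw [hτ, hw1, mul_zero, tr_zero]
    have hw2 : w.2 = 0 := by rw [hτ0, zero_add] at h0; exact h0
    exact hw (Prod.ext hw1 hw2)
  · rw [h0, map_one] at hcw
    rw [hcw, tr_one hmo] at h1
    exact one_ne_zero h1

/-! ### The geometric construction -/

section Geometry

open RealInnerProductSpace
open scoped Classical

lemma prod_add_eq_zero {b b' : K m × ZMod 2} (h : b + b' = 0) : b = b' := by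
  apply Prod.ext
  · have h1 : b.1 + b'.1 = 0 := congrArg Prod.fst h
    rw [← CharTwo.sub_eq_add] at h1
    exact sub_eq_zero.mp h1
  · exact zmod2_add_eq_zero (congrArg Prod.snd h)

lemma pairf_add_left (hm : m ≠ 0) (b b' v : K m × ZMod 2) :
    pairf m (b + b') v = pairf m b v + pairf m b' v := by
  unfold pairf
  simp only [Prod.fst_add, Prod.snd_add, add_mul, tr_add hm]
  ring

/-- The index type of the coordinates. -/
abbrev Idx (m : ℕ) := (K m × ZMod 2) ⊕ K m

/-- The ambient Euclidean space. -/
abbrev Amb (m : ℕ) := EuclideanSpace ℝ (Idx m)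

/-- Unnormalized de Caen vector. -/
def raw (m t : ℕ) (s : K m) (b : K m × ZMod 2) : Amb m :=
  (WithLp.equiv 2 _).symm
    (Sum.elim (fun v => chi (Qf m t s v + pairf m b v))
      (fun a => if a = s then Real.sqrt (2 ^ t) else 0))

lemma inner_raw (s s' : K m) (b b' : K m × ZMod 2) :
    ⟪raw m t s b, raw m t s' b'⟫
      = (∑ v : K m × ZMod 2,
          chi ((Qf m t s v + pairf m b v) + (Qf m t s' v + pairf m b' v)))
        + (if s = s' then (2 : ℝ) ^ t else 0) := by
  rw [PiLp.inner_apply]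
  simp only [raw, WithLp.equiv_symm_apply, PiLp.toLp_apply, RCLike.inner_apply', starRingEnd_apply,
    star_trivial]
  rw [Fintype.sum_sum_type]
  congr 1
  · refine Finset.sum_congr rfl fun v _ => ?_
    simp only [Sum.elim_inl]
    exact (chi_add _ _).symm
  · have hterm : ∀ a : K m,
        (if a = s then Real.sqrt (2 ^ t) else 0) * (if a = s' then Real.sqrt (2 ^ t) else 0)
        = if a = s then (if s = s' then Real.sqrt (2 ^ t) * Real.sqrt (2 ^ t) else 0)
          else 0 := by
      intro a
      by_cases h1 : a = s
      · subst h1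
        by_cases h2 : a = s' <;> simp [h2]
      · simp [h1]
    simp only [Sum.elim_inr]
    rw [Finset.sum_congr rfl fun a _ => hterm a, Finset.sum_ite_eq' Finset.univ s,
      if_pos (Finset.mem_univ s)]
    by_cases hss : s = s'
    · rw [if_pos hss, if_pos hss, Real.mul_self_sqrt (by positivity)]
    · rw [if_neg hss, if_neg hss]

lemma card_V (hmt : m + 1 = 2 * t) :
    (Fintype.card (K m × ZMod 2) : ℝ) = 2 ^ (2 * t) := by
  have hm : m ≠ 0 := by omega
  rw [Fintype.card_prod, card_K hm, ZMod.card 2]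
  push_cast
  rw [← pow_succ, ← hmt]

lemma inner_raw_self (hmt : m + 1 = 2 * t) (s : K m) (b : K m × ZMod 2) :
    ⟪raw m t s b, raw m t s b⟫ = 2 ^ (2 * t) + 2 ^ t := by
  rw [inner_raw, if_pos rfl]
  congr 1
  have h1 : ∀ v : K m × ZMod 2,
      chi ((Qf m t s v + pairf m b v) + (Qf m t s v + pairf m b v)) = 1 := by
    intro v
    rw [zmod2_add_self, chi_zero]
  rw [Finset.sum_congr rfl fun v _ => h1 v, Finset.sum_const, Finset.card_univ,
    nsmul_eq_mul, mul_one, card_V hmt]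

lemma inner_raw_same (hmt : m + 1 = 2 * t) (s : K m) {b b' : K m × ZMod 2} (hbb : b ≠ b') :
    ⟪raw m t s b, raw m t s b'⟫ = 2 ^ t := by
  have hm : m ≠ 0 := by omega
  rw [inner_raw, if_pos rfl]
  have h1 : ∀ v : K m × ZMod 2,
      (Qf m t s v + pairf m b v) + (Qf m t s v + pairf m b' v)
        = pairf m (b + b') v := by
    intro v
    rw [pairf_add_left hm]
    linear_combination zmod2_add_self (Qf m t s v)
  rw [Finset.sum_congr rfl fun v _ => congrArg chi (h1 v)]
  have hadd : ∀ u v : K m × ZMod 2,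
      pairf m (b + b') (u + v) = pairf m (b + b') u + pairf m (b + b') v :=
    fun u v => pairf_add_right hm _ u v
  have hnz : ∃ z, pairf m (b + b') z ≠ 0 :=
    pairf_nondeg hmt (fun h0 => hbb (prod_add_eq_zero h0))
  rw [sum_chi_eq_zero _ hadd hnz, zero_add]

lemma inner_raw_diff (hmt : m + 1 = 2 * t) {s s' : K m} (hss : s ≠ s')
    (b b' : K m × ZMod 2) :
    ⟪raw m t s b, raw m t s' b'⟫ = 2 ^ t ∨ ⟪raw m t s b, raw m t s' b'⟫ = -(2 ^ t) := by
  have hm : m ≠ 0 := by omega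
  rw [inner_raw, if_neg hss, add_zero]
  set G := ∑ v : K m × ZMod 2,
    chi ((Qf m t s v + pairf m b v) + (Qf m t s' v + pairf m b' v)) with hG
  have hG2 : G ^ 2 = 2 ^ (2 * t) := by
    have hf : ∀ u v : K m × ZMod 2,
        (Qf m t s (u + v) + pairf m b (u + v)) + (Qf m t s' (u + v) + pairf m b' (u + v))
          = ((Qf m t s u + pairf m b u) + (Qf m t s' u + pairf m b' u))
            + ((Qf m t s v + pairf m b v) + (Qf m t s' v + pairf m b' v))
            + (Bf m s u v + Bf m s' u v) := by
      intro u v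
      rw [Qf_polar hmt s, Qf_polar hmt s', pairf_add_right hm, pairf_add_right hm]
      ring
    have hf0 : (Qf m t s 0 + pairf m b 0) + (Qf m t s' 0 + pairf m b' 0) = 0 := by
      rw [Qf_zero, Qf_zero, pairf_zero, pairf_zero]
      ring
    have hBadd : ∀ u v w : K m × ZMod 2,
        Bf m s (u + v) w + Bf m s' (u + v) w
          = (Bf m s u w + Bf m s' u w) + (Bf m s v w + Bf m s' v w) := by
      intro u v w
      rw [Bf_add_left hm, Bf_add_left hm]
      ring
    rw [hG]
    rw [gauss_sq (fun v => (Qf m t s v + pairf m b v) + (Qf m t s' v + pairf m b' v))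
      (fun u v => Bf m s u v + Bf m s' u v) hf hf0 hBadd (D_nondeg hmt hss)]
    exact card_V hmt
  have hfac : (G - 2 ^ t) * (G + 2 ^ t) = 0 := by
    have h2t : (2 : ℝ) ^ (2 * t) = 2 ^ t * 2 ^ t := by
      rw [two_mul, pow_add]
    linear_combination hG2 - h2t
  rcases mul_eq_zero.mp hfac with h | h
  · exact Or.inl (sub_eq_zero.mp h)
  · exact Or.inr (eq_neg_of_add_eq_zero_left h)

/-- Normalized de Caen vector. -/
def vec (m t : ℕ) (s : K m) (b : K m × ZMod 2) : Amb m :=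
  (Real.sqrt (2 ^ (2 * t) + 2 ^ t))⁻¹ • raw m t s b

lemma cA_pos : (0 : ℝ) < 2 ^ (2 * t) + 2 ^ t := by positivity

lemma inner_vec (s s' : K m) (b b' : K m × ZMod 2) :
    ⟪vec m t s b, vec m t s' b'⟫ = ⟪raw m t s b, raw m t s' b'⟫ / (2 ^ (2 * t) + 2 ^ t) := by
  unfold vec
  rw [real_inner_smul_left, real_inner_smul_right]
  rw [← Real.sqrt_inv]
  rw [← mul_assoc, Real.mul_self_sqrt (by positivity)]
  rw [div_eq_inv_mul]

lemma norm_vec (hmt : m + 1 = 2 * t) (s : K m) (b : K m × ZMod 2) :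
    ‖vec m t s b‖ = 1 := by
  have h1 : ⟪vec m t s b, vec m t s b⟫ = 1 := by
    rw [inner_vec, inner_raw_self hmt, div_self (ne_of_gt cA_pos)]
  have h2 := real_inner_self_eq_norm_mul_norm (vec m t s b)
  rw [h1] at h2
  nlinarith [norm_nonneg (vec m t s b)]

end Geometry

section Hyperplane

open RealInnerProductSpace
open scoped Classical

/-- The common orthogonal vector. -/
def wvec (m t : ℕ) : Amb m :=
  (WithLp.equiv 2 _).symm
    (Sum.elim (fun v : K m × ZMod 2 => if v = 0 then 1 else 0)
      (fun _ : K m => -(Real.sqrt (2 ^ t))⁻¹))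

lemma wvec_ne_zero : wvec m t ≠ 0 := by
  intro h
  have h0 : (wvec m t) (Sum.inl (0 : K m × ZMod 2)) = 0 := by rw [h]; rfl
  have h1 : (wvec m t) (Sum.inl (0 : K m × ZMod 2)) = 1 := by
    simp [wvec, WithLp.equiv_symm_apply, PiLp.toLp_apply]
  rw [h1] at h0
  exact one_ne_zero h0

lemma inner_wvec_raw (s : K m) (b : K m × ZMod 2) :
    ⟪wvec m t, raw m t s b⟫ = 0 := by
  rw [PiLp.inner_apply]
  simp only [wvec, raw, WithLp.equiv_symm_apply, PiLp.toLp_apply, RCLike.inner_apply', starRingEnd_apply,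
    star_trivial]
  rw [Fintype.sum_sum_type]
  have hL : ∑ v : K m × ZMod 2,
      Sum.elim (fun v : K m × ZMod 2 => if v = 0 then (1:ℝ) else 0)
        (fun _ : K m => -(Real.sqrt (2 ^ t))⁻¹) (Sum.inl v)
      * Sum.elim (fun v => chi (Qf m t s v + pairf m b v))
        (fun a => if a = s then Real.sqrt (2 ^ t) else 0) (Sum.inl v) = 1 := by
    have hterm : ∀ v : K m × ZMod 2,
        (if v = 0 then (1:ℝ) else 0) * chi (Qf m t s v + pairf m b v)
          = if v = 0 then chi (Qf m t s v + pairf m b v) else 0 := by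
      intro v
      by_cases hv : v = 0 <;> simp [hv]
    simp only [Sum.elim_inl]
    rw [Finset.sum_congr rfl fun v _ => hterm v, Finset.sum_ite_eq' Finset.univ 0,
      if_pos (Finset.mem_univ _), Qf_zero, pairf_zero, add_zero, chi_zero]
  have hR : ∑ a : K m,
      Sum.elim (fun v : K m × ZMod 2 => if v = 0 then (1:ℝ) else 0)
        (fun _ : K m => -(Real.sqrt (2 ^ t))⁻¹) (Sum.inr a)
      * Sum.elim (fun v => chi (Qf m t s v + pairf m b v))
        (fun a => if a = s then Real.sqrt (2 ^ t) else 0) (Sum.inr a) = -1 := by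
    have hterm : ∀ a : K m,
        (-(Real.sqrt (2 ^ t))⁻¹) * (if a = s then Real.sqrt (2 ^ t) else 0)
          = if a = s then -1 else 0 := by
      intro a
      by_cases ha : a = s
      · rw [if_pos ha, if_pos ha, neg_mul, inv_mul_cancel₀]
        exact Real.sqrt_ne_zero'.mpr (by positivity)
      · rw [if_neg ha, if_neg ha, mul_zero]
    simp only [Sum.elim_inr]
    rw [Finset.sum_congr rfl fun a _ => hterm a, Finset.sum_ite_eq' Finset.univ s,
      if_pos (Finset.mem_univ _)]
  rw [hL, hR]
  ring

lemma mem_hyp (s : K m) (b : K m × ZMod 2) :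
    vec m t s b ∈ (ℝ ∙ (wvec m t))ᗮ := by
  rw [Submodule.mem_orthogonal_singleton_iff_inner_right]
  unfold vec
  rw [real_inner_smul_right, inner_wvec_raw, mul_zero]

lemma inner_vec_self (hmt : m + 1 = 2 * t) (s : K m) (b : K m × ZMod 2) :
    ⟪vec m t s b, vec m t s b⟫ = 1 := by
  rw [inner_vec, inner_raw_self hmt, div_self (ne_of_gt cA_pos)]

lemma two_pow_lt_cA : (2:ℝ) ^ t < 2 ^ (2 * t) + 2 ^ t := by
  have : (0:ℝ) < 2 ^ (2 * t) := by positivity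
  linarith

lemma vec_inj (hmt : m + 1 = 2 * t) {p q : K m × (K m × ZMod 2)}
    (h : vec m t p.1 p.2 = vec m t q.1 q.2) : p = q := by
  by_contra hpq
  have h1 : ⟪vec m t p.1 p.2, vec m t q.1 q.2⟫ = 1 := by
    rw [h, inner_vec_self hmt]
  rw [inner_vec] at h1
  have hcA := cA_pos (t := t)
  have h2 : ⟪raw m t p.1 p.2, raw m t q.1 q.2⟫ = 2 ^ (2 * t) + 2 ^ t := by
    rw [div_eq_one_iff_eq (ne_of_gt hcA)] at h1
    exact h1
  by_cases hs : p.1 = q.1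
  · have hb : p.2 ≠ q.2 := by
      intro hb
      exact hpq (Prod.ext hs hb)
    rw [← hs] at h2
    rw [inner_raw_same hmt p.1 hb] at h2
    exact absurd h2 (ne_of_lt (two_pow_lt_cA))
  · rcases inner_raw_diff hmt hs p.2 q.2 with h3 | h3 <;> rw [h3] at h2
    · exact absurd h2 (ne_of_lt (two_pow_lt_cA))
    · have : (0:ℝ) < 2 ^ t := by positivity
      linarith

lemma finrank_hyp (hmt : m + 1 = 2 * t) :
    Module.finrank ℝ ((ℝ ∙ (wvec m t))ᗮ) + 1 = 3 * 2 ^ m := by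
  have hm : m ≠ 0 := by omega
  have h1 : Module.finrank ℝ (ℝ ∙ (wvec m t)) = 1 :=
    finrank_span_singleton (wvec_ne_zero)
  have h2 := Submodule.finrank_add_finrank_orthogonal (K := (ℝ ∙ (wvec m t)))
  have h3 : Module.finrank ℝ (Amb m) = 3 * 2 ^ m := by
    rw [finrank_euclideanSpace]
    rw [Fintype.card_sum, Fintype.card_prod, card_K hm, ZMod.card 2]
    ring
  omega

end Hyperplane

end

end DeCaen

open RealInnerProductSpace DeCaen in
/-- De Caen's construction: for `n = 3·2^(2t-1) - 1` there exists an equiangular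
set of `(2/9)(n+1)²` unit vectors in `ℝⁿ`. -/
theorem de_caen_equiangular (t : ℕ) (ht : 0 < t) (n : ℕ)
    (hn : n = 3 * 2 ^ (2 * t - 1) - 1) :
    ∃ S : Finset (EuclideanSpace ℝ (Fin n)),
      (∀ p ∈ S, ‖p‖ = 1) ∧
      (S.card : ℝ) = (2 / 9) * ((n : ℝ) + 1) ^ 2 ∧
      ∃ α : ℝ, ∀ p ∈ S, ∀ q ∈ S, p ≠ q → ⟪p, q⟫ = α ∨ ⟪p, q⟫ = -α := by
  classical
  set m : ℕ := 2 * t - 1 with hmdef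
  have hmt : m + 1 = 2 * t := by omega
  have hm : m ≠ 0 := by omega
  have h2m : 0 < 2 ^ m := Nat.pow_pos (by norm_num)
  have hn1 : n + 1 = 3 * 2 ^ m := by omega
  have hrank : Module.finrank ℝ ((ℝ ∙ (wvec m t))ᗮ) = n := by
    have hfr := finrank_hyp (m := m) (t := t) hmt
    omega
  let L : ((ℝ ∙ (wvec m t))ᗮ) ≃ₗᵢ[ℝ] EuclideanSpace ℝ (Fin n) :=
    (stdOrthonormalBasis ℝ _).repr.trans
      (LinearIsometryEquiv.piLpCongrLeft 2 ℝ ℝ (finCongr hrank))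
  let ψ : K m × (K m × ZMod 2) → EuclideanSpace ℝ (Fin n) := fun p =>
    L ⟨vec m t p.1 p.2, mem_hyp p.1 p.2⟩
  have hψ : Function.Injective ψ := by
    intro p q h
    apply vec_inj hmt
    have h' := L.injective h
    exact congrArg Subtype.val h'
  refine ⟨Finset.univ.image ψ, ?_, ?_, ?_⟩
  · intro p hp
    obtain ⟨a, -, rfl⟩ := Finset.mem_image.mp hp
    show ‖L ⟨vec m t a.1 a.2, mem_hyp a.1 a.2⟩‖ = 1
    rw [LinearIsometryEquiv.norm_map, Submodule.coe_norm]
    exact norm_vec hmt a.1 a.2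
  · rw [Finset.card_image_of_injective _ hψ, Finset.card_univ]
    have hcard : Fintype.card (K m × (K m × ZMod 2)) = 2 ^ m * (2 ^ m * 2) := by
      rw [Fintype.card_prod, Fintype.card_prod, card_K hm, ZMod.card 2]
    have hcast : ((n : ℝ) + 1) = 3 * 2 ^ m := by
      have hc := congrArg (fun k : ℕ => (k : ℝ)) hn1
      push_cast at hc
      linarith
    rw [hcard, hcast]
    push_cast
    ring
  · refine ⟨2 ^ t / (2 ^ (2 * t) + 2 ^ t), ?_⟩
    intro p hp q hq hpq
    obtain ⟨a, -, rfl⟩ := Finset.mem_image.mp hp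
    obtain ⟨c, -, rfl⟩ := Finset.mem_image.mp hq
    have hac : a ≠ c := fun h => hpq (by rw [h])
    have hinner : ⟪ψ a, ψ c⟫
        = ⟪vec m t a.1 a.2, vec m t c.1 c.2⟫ := by
      show ⟪L ⟨vec m t a.1 a.2, mem_hyp a.1 a.2⟩, L ⟨vec m t c.1 c.2, mem_hyp c.1 c.2⟩⟫ = _
      rw [LinearIsometryEquiv.inner_map_map, Submodule.coe_inner]
    rw [hinner, inner_vec]
    by_cases hs : a.1 = c.1
    · have hb : a.2 ≠ c.2 := fun h => hac (Prod.ext hs h)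
      rw [← hs, inner_raw_same hmt a.1 hb]
      exact Or.inl rfl
    · rcases inner_raw_diff hmt hs a.2 c.2 with h3 | h3 <;> rw [h3]
      · exact Or.inl rfl
      · right
        rw [neg_div]
end

section
/- Let s = 2t > 0 be an even integer and n > 0 a positive integer. Let S be a finite set of unit vectors in ℝⁿ and let a₁, …, a_t be real numbers with 0 < aᵢ < 1 for each i, such that every inner product of two distinct vectors of S lies in {a₁, …, a_t, -a₁, …, -a_t}. Then |S| ≤ C(n+s-1, s). -/
open RealInnerProductSpace

open MvPolynomial in
/-- The key polynomial in the Delsarte–Goethals–Seidel argument. -/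
noncomputable def dgsKeyPoly (n t : ℕ) (a : Fin t → ℝ) (p : EuclideanSpace ℝ (Fin n)) :
    MvPolynomial (Fin n) ℝ :=
  ∏ i : Fin t, ((∑ j, C (p j) * X j) ^ 2 - C (a i ^ 2) * ∑ j, (X j) ^ 2)

open MvPolynomial in
lemma dgsKeyPoly_isHomogeneous (n t : ℕ) (a : Fin t → ℝ) (p : EuclideanSpace ℝ (Fin n)) :
    (dgsKeyPoly n t a p).IsHomogeneous (2 * t) := by
  have h2t : (2 * t) = ∑ _i : Fin t, 2 := by simp [mul_comm]
  rw [dgsKeyPoly, h2t]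
  apply IsHomogeneous.prod
  intro i _
  apply IsHomogeneous.sub
  · have h1 : ((∑ j, C (p j) * X j : MvPolynomial (Fin n) ℝ)).IsHomogeneous 1 :=
      IsHomogeneous.sum _ _ _ fun j _ => isHomogeneous_C_mul_X (p j) j
    simpa using h1.pow 2
  · exact (IsHomogeneous.sum _ _ _ fun j _ => isHomogeneous_X_pow j 2).C_mul _

open MvPolynomial in
lemma dgsKeyPoly_eval (n t : ℕ) (a : Fin t → ℝ) (p q : EuclideanSpace ℝ (Fin n)) :
    eval (fun j => q j) (dgsKeyPoly n t a p) = ∏ i, (⟪q, p⟫ ^ 2 - a i ^ 2 * ‖q‖ ^ 2) := by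
  have hinner : ⟪q, p⟫ = ∑ j, p j * q j := by
    simp [PiLp.inner_apply, RCLike.inner_apply, conj_trivial, mul_comm]
  have hnorm : ‖q‖ ^ 2 = ∑ j, q j * q j := by
    rw [EuclideanSpace.norm_sq_eq]
    congr 1; funext j; rw [Real.norm_eq_abs, sq_abs, sq]
  simp [dgsKeyPoly, hinner, hnorm, sq]

lemma prod_toMultiset_map {α M : Type*} [Fintype α] [CommMonoid M] (d : α →₀ ℕ) (g : α → M) :
    (d.toMultiset.map g).prod = ∏ j, g j ^ d j := by
  rw [Finsupp.toMultiset_map, Finsupp.prod_toMultiset,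
    Finsupp.prod_mapDomain_index (fun b => pow_zero _) (fun b m n => pow_add _ _ _)]
  exact Finsupp.prod_pow d g

/-- Delsarte–Goethals–Seidel: a spherical `2t`-distance set whose inner products
are `a₁, …, a_t, -a₁, …, -a_t` with `0 < aᵢ < 1` has at most `C(n+s-1, s)`
elements, where `s = 2t`. -/
theorem antipodal_distance_set_bound (n t : ℕ) (hn : 0 < n) (ht : 0 < t)
    (a : Fin t → ℝ) (ha : ∀ i, 0 < a i ∧ a i < 1)
    (S : Finset (EuclideanSpace ℝ (Fin n)))
    (hunit : ∀ p ∈ S, ‖p‖ = 1)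
    (hdist : ∀ p ∈ S, ∀ q ∈ S, p ≠ q → (∃ i, ⟪p, q⟫ = a i) ∨ (∃ i, ⟪p, q⟫ = -a i)) :
    S.card ≤ (n + 2 * t - 1).choose (2 * t) := by
  classical
  -- the evaluation functions of the key polynomials on S
  set v : S → (S → ℝ) := fun p q =>
    MvPolynomial.eval (fun j => (q : EuclideanSpace ℝ (Fin n)) j) (dgsKeyPoly n t a p) with hv
  have hval : ∀ p q : S, v p q =
      ∏ i, (⟪(q : EuclideanSpace ℝ (Fin n)), (p : EuclideanSpace ℝ (Fin n))⟫ ^ 2 - a i ^ 2) := by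
    intro p q
    show (MvPolynomial.eval fun j => (q : EuclideanSpace ℝ (Fin n)) j) (dgsKeyPoly n t a ↑p) = _
    rw [dgsKeyPoly_eval, hunit q q.2]
    simp
  -- diagonal values are nonzero
  have hdiagne : ∀ p : S, v p p ≠ 0 := by
    intro p
    rw [hval]
    apply Finset.prod_ne_zero_iff.mpr
    intro i _
    have : ⟪(p : EuclideanSpace ℝ (Fin n)), (p : EuclideanSpace ℝ (Fin n))⟫ = 1 := by
      rw [real_inner_self_eq_norm_sq, hunit p p.2]; norm_num
    rw [this]
    have h1 := (ha i).1
    have h2 := (ha i).2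
    nlinarith
  -- off-diagonal values vanish
  have hoff : ∀ p q : S, p ≠ q → v p q = 0 := by
    intro p q hpq
    rw [hval]
    have hne : (q : EuclideanSpace ℝ (Fin n)) ≠ (p : EuclideanSpace ℝ (Fin n)) := by
      intro h; exact hpq (Subtype.ext h.symm)
    rcases hdist q q.2 p p.2 hne with ⟨i, hi⟩ | ⟨i, hi⟩ <;>
      exact Finset.prod_eq_zero (Finset.mem_univ i) (by rw [hi]; ring)
  -- linear independence
  have hLI : LinearIndependent ℝ v := by
    rw [Fintype.linearIndependent_iff]
    intro g hg p
    have h := congrFun hg p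
    simp only [Finset.sum_apply, Pi.smul_apply, smul_eq_mul, Pi.zero_apply] at h
    rw [Finset.sum_eq_single p (fun q _ hq => by rw [hoff q p hq, mul_zero])
      (fun h' => absurd (Finset.mem_univ p) h')] at h
    rcases mul_eq_zero.mp h with h' | h'
    · exact h'
    · exact absurd h' (hdiagne p)
  -- the monomial functions of degree 2t
  set e : Sym (Fin n) (2 * t) → (S → ℝ) := fun m q =>
    ((m : Multiset (Fin n)).map (fun j => (q : EuclideanSpace ℝ (Fin n)) j)).prod with he
  set W : Submodule ℝ (S → ℝ) := Submodule.span ℝ (Set.range e) with hWdef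
  have hWfin : FiniteDimensional ℝ W :=
    FiniteDimensional.span_of_finite ℝ (Set.finite_range e)
  -- each v p lies in W
  have hmem : ∀ p : S, v p ∈ W := by
    intro p
    have hrepr : v p = ∑ d ∈ (dgsKeyPoly n t a ↑p).support,
        MvPolynomial.coeff d (dgsKeyPoly n t a ↑p) •
          (fun q : S => ∏ j, (q : EuclideanSpace ℝ (Fin n)) j ^ d j) := by
      funext q
      simp only [hv, MvPolynomial.eval_eq', Finset.sum_apply, Pi.smul_apply, smul_eq_mul]
    rw [hrepr]
    refine Submodule.sum_mem _ fun d hd => Submodule.smul_mem _ _ (Submodule.subset_span ?_)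
    have hdeg : Multiset.card d.toMultiset = 2 * t := by
      rw [Finsupp.card_toMultiset]
      have hcoeff : MvPolynomial.coeff d (dgsKeyPoly n t a ↑p) ≠ 0 :=
        MvPolynomial.mem_support_iff.mp hd
      have := dgsKeyPoly_isHomogeneous n t a ↑p hcoeff
      simpa [Finsupp.weight_apply, Finsupp.degree, Finsupp.sum] using this
    refine ⟨⟨d.toMultiset, hdeg⟩, ?_⟩
    funext q
    exact prod_toMultiset_map d _
  -- conclude
  have hLI' : LinearIndependent ℝ (fun p : S => (⟨v p, hmem p⟩ : W)) := by
    apply LinearIndependent.of_comp W.subtype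
    exact hLI
  have h1 : Fintype.card S ≤ Module.finrank ℝ W := hLI'.fintype_card_le_finrank
  have h2 : Module.finrank ℝ W ≤ Fintype.card (Sym (Fin n) (2 * t)) :=
    finrank_range_le_card e
  have h3 : Fintype.card (Sym (Fin n) (2 * t)) = (n + 2 * t - 1).choose (2 * t) := by
    rw [Sym.card_sym_eq_choose, Fintype.card_fin]
  calc S.card = Fintype.card S := (Fintype.card_coe S).symm
    _ ≤ Module.finrank ℝ W := h1
    _ ≤ (n + 2 * t - 1).choose (2 * t) := h3 ▸ h2
end

section
/- Let n > 0 be a positive integer and s > 0 an even integer. The number of vectors α = (α₁, …, α_n) ∈ ℕⁿ with α₁ ≤ 1, α₁ + ⋯ + α_n even, and α₁ + ⋯ + α_n ≤ s equals C(n+s-1, s). -/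
lemma bounded_sum_finite (m s : ℕ) : Finite {β : Fin m → ℕ // ∑ i, β i ≤ s} := by
  have hb : ∀ (β : {β : Fin m → ℕ // ∑ i, β i ≤ s}) (i : Fin m), β.1 i ≤ s := fun β i =>
    le_trans (Finset.single_le_sum (f := β.1) (fun _ _ => Nat.zero_le _) (Finset.mem_univ i)) β.2
  apply Finite.of_injective
    (fun β (i : Fin m) => (⟨β.1 i, Nat.lt_succ_of_le (hb β i)⟩ : Fin (s + 1)))
  intro a b h
  ext i
  exact congrArg Fin.val (congrFun h i)

lemma nat_card_sigma {ι : Type*} [Fintype ι] (f : ι → Type*) [∀ i, Finite (f i)] :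
    Nat.card (Σ i, f i) = ∑ i, Nat.card (f i) := by
  letI : ∀ i, Fintype (f i) := fun i => Fintype.ofFinite _
  simp [Nat.card_eq_fintype_card, Fintype.card_sigma]

lemma bounded_sum_card (m s : ℕ) :
    Nat.card {β : Fin m → ℕ // ∑ i, β i ≤ s} = (m + s).choose s := by
  induction m generalizing s with
  | zero =>
    rw [Nat.card_congr (Equiv.subtypeUnivEquiv (fun β => by simp))]
    simp
  | succ m ih =>
    have E : {β : Fin (m + 1) → ℕ // ∑ i, β i ≤ s} ≃
        Σ j : Fin (s + 1), {γ : Fin m → ℕ // ∑ i, γ i ≤ s - j.1} := by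
      refine
        { toFun := fun β =>
            ⟨⟨β.1 0, Nat.lt_succ_of_le (le_trans (Finset.single_le_sum
              (f := β.1) (fun _ _ => Nat.zero_le _) (Finset.mem_univ 0)) β.2)⟩,
             ⟨Fin.tail β.1, ?_⟩⟩
          invFun := fun p => ⟨Fin.cons p.1.1 p.2.1, ?_⟩
          left_inv := ?_
          right_inv := ?_ }
      · show ∑ i : Fin m, Fin.tail β.1 i ≤ s - β.1 0
        have h1 := β.2
        rw [Fin.sum_univ_succ] at h1
        have h2 : ∑ i : Fin m, Fin.tail β.1 i = ∑ i : Fin m, β.1 i.succ := rfl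
        omega
      · have h2 : ∑ i, (Fin.cons p.1.1 p.2.1 : Fin (m+1) → ℕ) i = p.1.1 + ∑ i, p.2.1 i := by
          rw [Fin.sum_univ_succ]
          simp [Fin.tail]
        have h3 := p.2.2
        have h4 := p.1.2
        omega
      · intro β
        apply Subtype.ext
        exact Fin.cons_self_tail β.1
      · intro p
        obtain ⟨⟨j, hj⟩, γ, hγ⟩ := p
        have h1 : (Fin.cons j γ : Fin (m+1) → ℕ) 0 = j := rfl
        have h2 : Fin.tail (Fin.cons j γ : Fin (m+1) → ℕ) = γ := by
          funext i; simp [Fin.tail]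
        exact Sigma.ext rfl (heq_of_eq (Subtype.ext h2))
    have := bounded_sum_finite m
    rw [Nat.card_congr E, nat_card_sigma]
    have h1 : ∀ j : Fin (s + 1), Nat.card {γ : Fin m → ℕ // ∑ i, γ i ≤ s - j.1}
        = (m + (s - j.1)).choose (s - j.1) := fun j => ih (s - j.1)
    rw [Finset.sum_congr rfl (fun j _ => h1 j)]
    rw [Fin.sum_univ_eq_sum_range (fun j => (m + (s - j)).choose (s - j))]
    have h2 : ∑ j ∈ Finset.range (s + 1), (m + (s - j)).choose (s - j)
        = ∑ t ∈ Finset.range (s + 1), (m + t).choose t := by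
      have := Finset.sum_range_reflect (fun t => (m + t).choose t) (s + 1)
      simpa using this
    rw [h2]
    have h3 : ∀ t, (m + t).choose t = (t + m).choose m := fun t => by
      rw [add_comm t m, ← Nat.choose_symm (Nat.le_add_right m t), Nat.add_sub_cancel_left]
    rw [Finset.sum_congr rfl (fun t _ => h3 t), Nat.sum_range_add_choose s m]
    rw [show s + m + 1 = m + 1 + s by omega]
    exact Nat.choose_symm_add

/-- The number of `n`-tuples `α` of nonnegative integers with `α₁ ≤ 1`,
`Σᵢ αᵢ` even and `Σᵢ αᵢ ≤ s` (where `s` is even and positive) equals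
`C(n+s-1, s)`. -/
theorem count_special_monomials (n s : ℕ) (hn : 0 < n) (hs : 0 < s)
    (hseven : Even s) :
    {α : Fin n → ℕ | α ⟨0, hn⟩ ≤ 1 ∧ Even (∑ i, α i) ∧ ∑ i, α i ≤ s}.ncard
      = (n + s - 1).choose s := by
  obtain ⟨m, rfl⟩ : ∃ m, n = m + 1 := ⟨n - 1, by omega⟩
  rw [← Nat.card_coe_set_eq]
  have E : ↥{α : Fin (m+1) → ℕ | α ⟨0, Nat.succ_pos m⟩ ≤ 1 ∧ Even (∑ i, α i) ∧ ∑ i, α i ≤ s}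
      ≃ {β : Fin m → ℕ // ∑ i, β i ≤ s} := by
    refine
      { toFun := fun a => ⟨Fin.tail a.1, ?_⟩
        invFun := fun b => ⟨Fin.cons (if Even (∑ i, b.1 i) then 0 else 1) b.1, ?_⟩
        left_inv := ?_
        right_inv := ?_ }
    · obtain ⟨h0, heven, hle⟩ := a.2
      have hsum : ∑ i, a.1 i = a.1 0 + ∑ i : Fin m, a.1 i.succ := Fin.sum_univ_succ a.1
      have h2 : ∑ i : Fin m, Fin.tail a.1 i = ∑ i : Fin m, a.1 i.succ := rfl
      omega
    · set c := if Even (∑ i, b.1 i) then 0 else 1 with hc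
      have hsum : ∑ i, (Fin.cons c b.1 : Fin (m+1) → ℕ) i = c + ∑ i, b.1 i := by
        rw [Fin.sum_univ_succ]; simp [Fin.tail]
      have hb := b.2
      have h0 : (Fin.cons c b.1 : Fin (m+1) → ℕ) ⟨0, Nat.succ_pos m⟩ = c := rfl
      refine ⟨by rw [h0, hc]; split <;> omega, ?_, ?_⟩
      · rw [hsum]
        by_cases h : Even (∑ i, b.1 i)
        · simp only [hc, if_pos h]
          simpa using h
        · simp only [hc, if_neg h]
          rw [add_comm]
          exact Nat.even_add_one.mpr h
      · rw [hsum]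
        by_cases h : Even (∑ i, b.1 i)
        · simp only [hc, if_pos h]; omega
        · simp only [hc, if_neg h]
          have hne : ∑ i, b.1 i ≠ s := by
            intro he; rw [he] at h; exact h hseven
          omega
    · intro a
      obtain ⟨h0, heven, hle⟩ := a.2
      apply Subtype.ext
      show Fin.cons (if Even (∑ i, Fin.tail a.1 i) then 0 else 1) (Fin.tail a.1) = a.1
      have hsum : ∑ i, a.1 i = a.1 0 + ∑ i, Fin.tail a.1 i := Fin.sum_univ_succ a.1
      have h00 : a.1 ⟨0, Nat.succ_pos m⟩ = a.1 0 := rfl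
      have hc : (if Even (∑ i, Fin.tail a.1 i) then 0 else 1) = a.1 0 := by
        rw [h00] at h0
        rcases Nat.le_one_iff_eq_zero_or_eq_one.mp h0 with h | h
        · rw [h, if_pos]
          rw [hsum, h, zero_add] at heven
          exact heven
        · rw [h, if_neg]
          rw [hsum, h] at heven
          intro hcon
          rw [add_comm] at heven
          exact (Nat.even_add_one.mp heven) hcon
      rw [hc]
      exact Fin.cons_self_tail a.1
    · intro b
      apply Subtype.ext
      show Fin.tail (Fin.cons (if Even (∑ i, b.1 i) then 0 else 1) b.1 : Fin (m+1) → ℕ) = b.1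
      funext i; simp [Fin.tail]
  rw [Nat.card_congr E, bounded_sum_card]
  congr 1
  omega
end

section
/- Let n > 1 be a positive integer and s > 0 an even integer. The map sending α = (α₁, …, α_n) to (α₂, …, α_n) is a bijection from the set M(n,s) = {α ∈ ℕⁿ : α₁ ≤ 1, Σᵢ αᵢ is even, Σᵢ αᵢ ≤ s} onto the set N(n-1,s) = {β ∈ ℕ^{n-1} : Σᵢ βᵢ ≤ s}. -/
lemma sum_split_first {n : ℕ} (hn : 0 < n) (α : Fin n → ℕ) :
    ∑ i, α i = α ⟨0, hn⟩ + ∑ i : Fin (n - 1), α ⟨i.val + 1, by omega⟩ := by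
  rcases n with _ | m
  · omega
  · rw [Fin.sum_univ_succ]
    rfl

/-- The map dropping the first coordinate is a bijection from
`M(n,s) = {α ∈ ℕⁿ : α₁ ≤ 1, Σ αᵢ even, Σ αᵢ ≤ s}` onto
`N(n-1,s) = {β ∈ ℕ^(n-1) : Σ βᵢ ≤ s}`, for `n > 1` and `s > 0` even. -/
theorem drop_first_bijection (n s : ℕ) (hn : 1 < n) (hs : 0 < s)
    (hseven : Even s) :
    Set.BijOn (fun (α : Fin n → ℕ) (i : Fin (n - 1)) => α ⟨i.val + 1, by omega⟩)
      {α : Fin n → ℕ | α ⟨0, by omega⟩ ≤ 1 ∧ Even (∑ i, α i) ∧ ∑ i, α i ≤ s}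
      {β : Fin (n - 1) → ℕ | ∑ i, β i ≤ s} := by
  have h0 : 0 < n := by omega
  refine ⟨?_, ?_, ?_⟩
  · rintro α ⟨h1, h2, h3⟩
    have := sum_split_first h0 α
    simp only [Set.mem_setOf_eq]
    omega
  · rintro α ⟨ha1, ha2, ha3⟩ β ⟨hb1, hb2, hb3⟩ h
    have hsum : ∑ i : Fin (n-1), α ⟨i.val + 1, by omega⟩
        = ∑ i : Fin (n-1), β ⟨i.val + 1, by omega⟩ := by
      exact Finset.sum_congr rfl fun i _ => congrFun h i
    have hA := sum_split_first h0 α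
    have hB := sum_split_first h0 β
    have h00 : α ⟨0, h0⟩ = β ⟨0, h0⟩ := by
      rcases ha2 with ⟨a, ha⟩
      rcases hb2 with ⟨b, hb⟩
      omega
    funext i
    rcases i with ⟨i, hi⟩
    cases i with
    | zero => exact h00
    | succ j => exact congrFun h ⟨j, by omega⟩
  · rintro β hβ
    simp only [Set.mem_setOf_eq] at hβ
    set a0 : ℕ := if Even (∑ i, β i) then 0 else 1 with ha0
    refine ⟨fun i => if h : i.val = 0 then a0 else β ⟨i.val - 1, by omega⟩, ?_, ?_⟩
    · have htail : ∑ i : Fin (n-1),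
          (fun i : Fin n => if h : i.val = 0 then a0 else β ⟨i.val - 1, by omega⟩)
            ⟨i.val + 1, by omega⟩ = ∑ i, β i := by
        refine Finset.sum_congr rfl fun i _ => ?_
        simp
      have hS := sum_split_first h0
        (fun i : Fin n => if h : i.val = 0 then a0 else β ⟨i.val - 1, by omega⟩)
      rw [htail] at hS
      rw [dif_pos rfl] at hS
      refine ⟨?_, ?_, ?_⟩
      · show (if h : (0:ℕ) = 0 then a0 else _) ≤ 1
        rw [dif_pos rfl, ha0]
        split <;> omega
      · rw [hS]
        by_cases h : Even (∑ i, β i)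
        · simpa [ha0, h] using h
        · simp only [ha0, if_neg h]
          rcases Nat.odd_iff.mp (Nat.not_even_iff_odd.mp h) with hmod
          rw [Nat.even_iff]; omega
      · rw [hS]
        by_cases h : Even (∑ i, β i)
        · simp only [ha0, if_pos h]; omega
        · simp only [ha0, if_neg h]
          rcases hseven with ⟨t, ht⟩
          have : ∑ i, β i ≠ s := by
            intro he; exact h (he ▸ ⟨t, ht⟩)
          omega
    · funext i
      simp
end
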